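/- arXiv:2005.13175 — 5 statements merged into one kernel-verified Lean document; each statement's English description precedes it below -/
import Mathlib

section
/- Let Ω be a bounded domain in ℝ^N (N ≥ 2) and let u ∈ C⁰(cl Ω) ∩ C²(Ω) satisfy -Δu = N in Ω with u = 0 on ∂Ω. Then u(x) ≥ d_Γ(x)²/2 for every x ∈ cl Ω, where d_Γ(x) is the distance from x to ∂Ω. -/
open Metric Set Filter Topology Set.Notation

noncomputable def laplacian {N : ℕ} (u : EuclideanSpace ℝ (Fin N) → ℝ)
    (x : EuclideanSpace ℝ (Fin N)) : ℝ :=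
  ∑ i : Fin N, fderiv ℝ (fun y => fderiv ℝ u y (EuclideanSpace.single i 1)) x
    (EuclideanSpace.single i 1)

variable {N : ℕ}


lemma secondDeriv_nonneg_of_isLocalMin {E : Type*} [NormedAddCommGroup E] [NormedSpace ℝ E]
    {h : E → ℝ} {s : Set E} (hs : IsOpen s) {z : E} (hz : z ∈ s)
    (hC2 : ContDiffOn ℝ 2 h s) (hmin : IsLocalMin h z) (v : E) :
    0 ≤ fderiv ℝ (fun y => fderiv ℝ h y v) z v := by
  by_contra hcon
  push_neg at hcon
  set Fv : E → ℝ := fun y => fderiv ℝ h y v with hFvdef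
  set c : ℝ := fderiv ℝ Fv z v with hcdef
  have hF : ContDiffOn ℝ 1 (fderiv ℝ h) s := hC2.fderiv_of_isOpen hs (by norm_num)
  have hFv : DifferentiableAt ℝ Fv z :=
    ((hF.differentiableOn (by norm_num)).differentiableAt (hs.mem_nhds hz)).clm_apply
      (differentiableAt_const v)
  have hL : ∀ t : ℝ, HasDerivAt (fun t : ℝ => z + t • v) v t := by
    intro t
    simpa using (((hasDerivAt_id t).smul_const v).const_add z)
  set g : ℝ → ℝ := fun t => h (z + t • v) with hgdef
  set T : Set ℝ := {t : ℝ | z + t • v ∈ s} with hTdef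
  have hTopen : IsOpen T := (hs.preimage (by continuity))
  have hT0 : (0 : ℝ) ∈ T := by simp [hTdef, hz]
  have hg' : ∀ t ∈ T, HasDerivAt g (Fv (z + t • v)) t := by
    intro t ht
    exact (((hC2.differentiableOn (by norm_num)).differentiableAt
      (hs.mem_nhds ht)).hasFDerivAt).comp_hasDerivAt t (hL t)
  have hz0 : z + (0:ℝ) • v = z := by simp
  have hgmin : IsLocalMin g 0 := by
    have hm : IsLocalMin h (z + (0:ℝ) • v) := by rw [hz0]; exact hmin
    exact IsLocalMin.comp_continuous (g := fun t : ℝ => z + t • v) (b := (0:ℝ)) hm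
      ((by continuity : Continuous fun t : ℝ => z + t • v).continuousAt)
  have hevd : ∀ᶠ t in 𝓝 (0:ℝ), deriv g t = Fv (z + t • v) := by
    filter_upwards [hTopen.mem_nhds hT0] with t ht
    exact (hg' t ht).deriv
  have hG : HasDerivAt (deriv g) c 0 := by
    have h1 : HasDerivAt (fun t : ℝ => Fv (z + t • v)) c 0 := by
      have hFv' : HasFDerivAt Fv (fderiv ℝ Fv z) (z + (0:ℝ) • v) := by
        rw [hz0]; exact hFv.hasFDerivAt
      have := hFv'.comp_hasDerivAt 0 (hL 0)
      exact this
    exact h1.congr_of_eventuallyEq hevd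
  have hg0 : deriv g 0 = 0 := hgmin.deriv_eq_zero
  have hslope : Tendsto (slope (deriv g) 0) (𝓝[≠] (0:ℝ)) (𝓝 c) :=
    hasDerivAt_iff_tendsto_slope.mp hG
  have hev : ∀ᶠ t in 𝓝[>] (0:ℝ), slope (deriv g) 0 t < 0 := by
    have : ∀ᶠ t in 𝓝[≠] (0:ℝ), slope (deriv g) 0 t < 0 := hslope (Iio_mem_nhds hcon)
    exact this.filter_mono (nhdsWithin_mono _ (fun t ht => ne_of_gt ht))
  have h1 : ∀ᶠ t in 𝓝[>] (0:ℝ), deriv g t < 0 := by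
    filter_upwards [hev, self_mem_nhdsWithin] with t hst ht
    rw [slope_def_field] at hst
    have : (deriv g t - deriv g 0) / (t - 0) < 0 := by
      simpa [div_eq_inv_mul] using hst
    rw [hg0, sub_zero, sub_zero] at this
    exact (div_neg_iff.mp this).elim (fun ⟨a, b⟩ => absurd b (not_lt.mpr ht.le)) fun ⟨a, _⟩ => a
  have h2 : ∀ᶠ t in 𝓝[>] (0:ℝ), t ∈ T :=
    (hTopen.eventually_mem hT0).filter_mono nhdsWithin_le_nhds
  have h3 : ∀ᶠ t in 𝓝[>] (0:ℝ), g 0 ≤ g t := hgmin.filter_mono nhdsWithin_le_nhds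
  obtain ⟨U, hU⟩ := (h1.and (h2.and h3)).exists_mem
  obtain ⟨u, hu0, husub⟩ := mem_nhdsGT_iff_exists_Ioc_subset.mp
    (Filter.inter_mem hU.1 self_mem_nhdsWithin)
  have hu0' : (0:ℝ) < u := hu0
  have hIoc : ∀ t ∈ Set.Ioc (0:ℝ) u, deriv g t < 0 ∧ t ∈ T ∧ g 0 ≤ g t := by
    intro t ht
    have := husub ht
    exact hU.2 _ this.1
  have hIccT : Set.Icc (0:ℝ) u ⊆ T := by
    intro t ht
    rcases eq_or_lt_of_le ht.1 with h | h
    · simpa [← h] using hT0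
    · exact (hIoc t ⟨h, ht.2⟩).2.1
  have hanti : StrictAntiOn g (Set.Icc (0:ℝ) u) := by
    apply strictAntiOn_of_deriv_neg (convex_Icc 0 u)
    · intro t ht
      exact ((hg' t (hIccT ht)).continuousAt).continuousWithinAt
    · intro t ht
      rw [interior_Icc] at ht
      exact (hIoc t ⟨ht.1, ht.2.le⟩).1
  have : g u < g 0 := hanti (Set.left_mem_Icc.mpr hu0'.le) (Set.right_mem_Icc.mpr hu0'.le) hu0'
  have : g 0 ≤ g u := (hIoc u ⟨hu0', le_refl u⟩).2.2
  linarith [hanti (Set.left_mem_Icc.mpr hu0'.le) (Set.right_mem_Icc.mpr hu0'.le) hu0']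

lemma min_principle {N : ℕ} {V : Set (EuclideanSpace ℝ (Fin N))} (hVo : IsOpen V)
    (hVb : Bornology.IsBounded V) {h : EuclideanSpace ℝ (Fin N) → ℝ}
    (hc : ContinuousOn h (closure V)) (hC2 : ContDiffOn ℝ 2 h V)
    (hlap : ∀ y ∈ V, laplacian h y < 0) (hfr : ∀ y ∈ frontier V, 0 ≤ h y) :
    ∀ y ∈ closure V, 0 ≤ h y := by
  intro y hy
  obtain ⟨z, hzcl, hzmin⟩ := (hVb.isCompact_closure).exists_isMinOn ⟨y, hy⟩ hc
  by_cases hzV : z ∈ V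
  · exfalso
    have hloc : IsLocalMin h z :=
      hzmin.isLocalMin (mem_of_superset (hVo.mem_nhds hzV) subset_closure)
    have hge : 0 ≤ laplacian h z :=
      Finset.sum_nonneg fun i _ =>
        secondDeriv_nonneg_of_isLocalMin hVo hzV hC2 hloc (EuclideanSpace.single i 1)
    linarith [hlap z hzV]
  · have hzf : z ∈ frontier V := by
      rw [hVo.frontier_eq]; exact ⟨hzcl, hzV⟩
    exact le_trans (hfr z hzf) (hzmin hy)


lemma fderiv_wfun (p : EuclideanSpace ℝ (Fin N)) (d : ℝ) (y : EuclideanSpace ℝ (Fin N))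
    (j : Fin N) :
    fderiv ℝ (fun z : EuclideanSpace ℝ (Fin N) => (d ^ 2 - ∑ i, (z i - p i) ^ 2) / 2) y
      (EuclideanSpace.single j 1) = p j - y j := by
  have hqi : ∀ i : Fin N, HasFDerivAt (fun z : EuclideanSpace ℝ (Fin N) => (z i - p i) ^ 2)
      (((2 : ℝ) * (y i - p i)) • (EuclideanSpace.proj i : EuclideanSpace ℝ (Fin N) →L[ℝ] ℝ)) y := by
    intro i
    have h0 : HasFDerivAt (fun z : EuclideanSpace ℝ (Fin N) => z i)
        (EuclideanSpace.proj i : EuclideanSpace ℝ (Fin N) →L[ℝ] ℝ) y :=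
      (EuclideanSpace.proj (𝕜 := ℝ) (ι := Fin N) i).hasFDerivAt
    have h1 : HasFDerivAt (fun z : EuclideanSpace ℝ (Fin N) => z i - p i)
        (EuclideanSpace.proj i : EuclideanSpace ℝ (Fin N) →L[ℝ] ℝ) y :=
      h0.sub_const (p i)
    have := h1.fun_mul h1
    have h2 : HasFDerivAt (fun z : EuclideanSpace ℝ (Fin N) => (z i - p i) * (z i - p i))
        (((2 : ℝ) * (y i - p i)) • (EuclideanSpace.proj i : EuclideanSpace ℝ (Fin N) →L[ℝ] ℝ))
        y := by
      exact this.congr_fderiv (by rw [← add_smul, two_mul])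
    convert h2 using 2 with z
    ring
  have hq : HasFDerivAt (fun z : EuclideanSpace ℝ (Fin N) => ∑ i, (z i - p i) ^ 2)
      (∑ i, ((2 : ℝ) * (y i - p i)) • (EuclideanSpace.proj i : EuclideanSpace ℝ (Fin N) →L[ℝ] ℝ))
      y := HasFDerivAt.fun_sum fun i _ => hqi i
  have hw : HasFDerivAt (fun z : EuclideanSpace ℝ (Fin N) => (d ^ 2 - ∑ i, (z i - p i) ^ 2) / 2)
      (((2 : ℝ)⁻¹) • (0 - ∑ i, ((2 : ℝ) * (y i - p i)) •
        (EuclideanSpace.proj i : EuclideanSpace ℝ (Fin N) →L[ℝ] ℝ))) y := by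
    have := ((hasFDerivAt_const (d ^ 2) y).fun_sub hq).fun_const_smul ((2 : ℝ)⁻¹)
    exact this.congr_of_eventuallyEq (Filter.Eventually.of_forall fun z => by
      simp [div_eq_inv_mul, smul_eq_mul])
  rw [hw.fderiv]
  simp only [ContinuousLinearMap.coe_smul', Pi.smul_apply, ContinuousLinearMap.coe_sub',
    Pi.sub_apply, ContinuousLinearMap.zero_apply, ContinuousLinearMap.coe_sum', Finset.sum_apply,
    PiLp.proj_apply, smul_eq_mul]
  rw [Finset.sum_eq_single j]
  · simp [EuclideanSpace.single_apply]
    try ring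
  · intro i _ hij
    simp [EuclideanSpace.single_apply, hij]
  · simp

lemma lap_wfun (p : EuclideanSpace ℝ (Fin N)) (d : ℝ) (x : EuclideanSpace ℝ (Fin N)) :
    laplacian (fun z : EuclideanSpace ℝ (Fin N) => (d ^ 2 - ∑ i, (z i - p i) ^ 2) / 2) x
      = -(N : ℝ) := by
  unfold laplacian
  have hterm : ∀ j : Fin N,
      fderiv ℝ (fun y : EuclideanSpace ℝ (Fin N) =>
        fderiv ℝ (fun z : EuclideanSpace ℝ (Fin N) => (d ^ 2 - ∑ i, (z i - p i) ^ 2) / 2) y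
          (EuclideanSpace.single j 1)) x (EuclideanSpace.single j 1) = -1 := by
    intro j
    have heq : (fun y : EuclideanSpace ℝ (Fin N) =>
        fderiv ℝ (fun z : EuclideanSpace ℝ (Fin N) => (d ^ 2 - ∑ i, (z i - p i) ^ 2) / 2) y
          (EuclideanSpace.single j 1)) = fun y : EuclideanSpace ℝ (Fin N) => p j - y j := by
      funext y
      exact fderiv_wfun p d y j
    rw [heq]
    have h0 : HasFDerivAt (fun y : EuclideanSpace ℝ (Fin N) => y j)
        (EuclideanSpace.proj j : EuclideanSpace ℝ (Fin N) →L[ℝ] ℝ) x :=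
      (EuclideanSpace.proj (𝕜 := ℝ) (ι := Fin N) j).hasFDerivAt
    have h1 : HasFDerivAt (fun y : EuclideanSpace ℝ (Fin N) => p j - y j)
        (0 - (EuclideanSpace.proj j : EuclideanSpace ℝ (Fin N) →L[ℝ] ℝ)) x :=
      (hasFDerivAt_const (p j) x).sub h0
    rw [h1.fderiv]
    simp [EuclideanSpace.single_apply]
  rw [Finset.sum_congr rfl fun j _ => hterm j]
  simp

lemma lap_sub_wfun {s : Set (EuclideanSpace ℝ (Fin N))} (hs : IsOpen s)
    {x : EuclideanSpace ℝ (Fin N)} (hx : x ∈ s) {u : EuclideanSpace ℝ (Fin N) → ℝ}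
    (hu : ContDiffOn ℝ 2 u s) (c : ℝ) (p : EuclideanSpace ℝ (Fin N)) (d : ℝ) :
    laplacian (fun y : EuclideanSpace ℝ (Fin N) =>
      u y - c * ((d ^ 2 - ∑ i, (y i - p i) ^ 2) / 2)) x = laplacian u x + c * N := by
  set W : EuclideanSpace ℝ (Fin N) → ℝ :=
    fun y => (d ^ 2 - ∑ i, (y i - p i) ^ 2) / 2 with hWdef
  have hWc : ContDiff ℝ 2 W := by
    apply ContDiff.div_const
    apply ContDiff.sub contDiff_const
    apply ContDiff.sum
    intro i _
    exact ((EuclideanSpace.proj (𝕜 := ℝ) (ι := Fin N) i).contDiff.sub contDiff_const).pow 2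
  have hud : DifferentiableOn ℝ u s := hu.differentiableOn (by norm_num)
  have hF : ContDiffOn ℝ 1 (fderiv ℝ u) s := hu.fderiv_of_isOpen hs (by norm_num)
  have hstep1 : ∀ j : Fin N, (fun y : EuclideanSpace ℝ (Fin N) =>
      fderiv ℝ (fun z => u z - c * W z) y (EuclideanSpace.single j 1)) =ᶠ[𝓝 x]
      (fun y => fderiv ℝ u y (EuclideanSpace.single j 1) - c * (p j - y j)) := by
    intro j
    filter_upwards [hs.mem_nhds hx] with y hy
    have h1 : DifferentiableAt ℝ u y := hud.differentiableAt (hs.mem_nhds hy)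
    have h2 : DifferentiableAt ℝ (fun z => c * W z) y :=
      ((hWc.differentiable (by norm_num)) y).const_mul c
    rw [fderiv_fun_sub h1 h2]
    have h3 : fderiv ℝ (fun z => c * W z) y = c • fderiv ℝ W y := fderiv_const_mul
      ((hWc.differentiable (by norm_num)) y) c
    simp only [ContinuousLinearMap.coe_sub', Pi.sub_apply, h3, ContinuousLinearMap.coe_smul',
      Pi.smul_apply, smul_eq_mul]
    rw [show fderiv ℝ W y (EuclideanSpace.single j 1) = p j - y j from fderiv_wfun p d y j]
  have hterm : ∀ j : Fin N,
      fderiv ℝ (fun y : EuclideanSpace ℝ (Fin N) =>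
        fderiv ℝ (fun z => u z - c * W z) y (EuclideanSpace.single j 1)) x
        (EuclideanSpace.single j 1)
      = fderiv ℝ (fun y : EuclideanSpace ℝ (Fin N) =>
          fderiv ℝ u y (EuclideanSpace.single j 1)) x (EuclideanSpace.single j 1) + c := by
    intro j
    rw [(hstep1 j).fderiv_eq]
    have hdA : DifferentiableAt ℝ
        (fun y : EuclideanSpace ℝ (Fin N) => fderiv ℝ u y (EuclideanSpace.single j 1)) x :=
      ((hF.differentiableOn (by norm_num)).differentiableAt (hs.mem_nhds hx)).clm_apply
        (differentiableAt_const _)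
    have hdB : DifferentiableAt ℝ
        (fun y : EuclideanSpace ℝ (Fin N) => c * (p j - y j)) x := by
      apply DifferentiableAt.const_mul
      exact (differentiableAt_const (p j)).sub
        ((EuclideanSpace.proj (𝕜 := ℝ) (ι := Fin N) j).differentiableAt)
    rw [fderiv_fun_sub hdA hdB]
    have hB : fderiv ℝ (fun y : EuclideanSpace ℝ (Fin N) => c * (p j - y j)) x
        (EuclideanSpace.single j 1) = -c := by
      have h1 : HasFDerivAt (fun y : EuclideanSpace ℝ (Fin N) => p j - y j)
          (0 - (EuclideanSpace.proj j : EuclideanSpace ℝ (Fin N) →L[ℝ] ℝ)) x :=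
        (hasFDerivAt_const (p j) x).sub
          ((EuclideanSpace.proj (𝕜 := ℝ) (ι := Fin N) j).hasFDerivAt)
      have h2 : HasFDerivAt (fun y : EuclideanSpace ℝ (Fin N) => c * (p j - y j))
          (c • (0 - (EuclideanSpace.proj j : EuclideanSpace ℝ (Fin N) →L[ℝ] ℝ))) x :=
        h1.const_mul c
      rw [h2.fderiv]
      simp [EuclideanSpace.single_apply]
    simp only [ContinuousLinearMap.coe_sub', Pi.sub_apply, hB]
    ring
  unfold laplacian
  rw [Finset.sum_congr rfl fun j _ => hterm j, Finset.sum_add_distrib]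
  simp [mul_comm]


/-- If `u ∈ C⁰(cl Ω) ∩ C²(Ω)` satisfies `-Δu = N` in the bounded domain `Ω`
with `u = 0` on `∂Ω`, then `u(x) ≥ d_Γ(x)²/2` on `cl Ω`. -/
theorem stmt_0 {N : ℕ} (hN : 2 ≤ N) (Ω : Set (EuclideanSpace ℝ (Fin N)))
    (hΩopen : IsOpen Ω) (hΩconn : IsConnected Ω) (hΩbdd : Bornology.IsBounded Ω)
    (u : EuclideanSpace ℝ (Fin N) → ℝ)
    (hu_cont : ContinuousOn u (closure Ω))
    (hu_C2 : ContDiffOn ℝ 2 u Ω)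
    (hpde : ∀ x ∈ Ω, -laplacian u x = (N : ℝ))
    (hbdry : ∀ x ∈ frontier Ω, u x = 0) :
    ∀ x ∈ closure Ω, u x ≥ (infDist x (frontier Ω)) ^ 2 / 2 := by
  have hNpos : (0:ℝ) < N := by
    have : (0:ℕ) < N := lt_of_lt_of_le (by norm_num) hN
    exact_mod_cast this
  have hu_nonneg : ∀ y ∈ closure Ω, 0 ≤ u y := by
    apply min_principle hΩopen hΩbdd hu_cont hu_C2
    · intro y hy
      have := hpde y hy
      linarith
    · intro y hy
      exact (hbdry y hy).ge
  intro x hx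
  set d := infDist x (frontier Ω) with hddef
  have hd0 : 0 ≤ d := infDist_nonneg
  rcases eq_or_lt_of_le hd0 with hd | hd
  · rw [← hd]
    norm_num
    exact hu_nonneg x hx
  · have hxΩ : x ∈ Ω := by
      by_contra hxo
      have hxf : x ∈ frontier Ω := by
        rw [hΩopen.frontier_eq]; exact ⟨hx, hxo⟩
      have := infDist_zero_of_mem hxf
      rw [← hddef] at this
      linarith
    have hball : ball x d ⊆ Ω := by
      have hdisj : Disjoint (frontier Ω) (ball x d) := disjoint_ball_infDist.symm
      have hclopen : IsClopen ((ball x d) ↓∩ Ω) := isClopen_preimage_val hΩopen hdisj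
      haveI : PreconnectedSpace (ball x d) :=
        Subtype.preconnectedSpace (convex_ball x d).isPreconnected
      have huniv : ((ball x d) ↓∩ Ω) = univ :=
        hclopen.eq_univ ⟨⟨x, mem_ball_self hd⟩, hxΩ⟩
      intro y hy
      exact Set.eq_univ_iff_forall.mp huniv ⟨y, hy⟩
    have hballcl : closure (ball x d) ⊆ closure Ω := closure_mono hball
    have hWc : ContDiff ℝ 2 (fun y : EuclideanSpace ℝ (Fin N) =>
        (d ^ 2 - ∑ i, (y i - x i) ^ 2) / 2) := by
      apply ContDiff.div_const
      apply ContDiff.sub contDiff_const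
      apply ContDiff.sum
      intro i _
      exact ((EuclideanSpace.proj (𝕜 := ℝ) (ι := Fin N) i).contDiff.sub contDiff_const).pow 2
    have key : ∀ ε ∈ Ioo (0:ℝ) 1, (1 - ε) * (d ^ 2 / 2) ≤ u x := by
      intro ε hε
      set c : ℝ := 1 - ε with hcdef
      set h : EuclideanSpace ℝ (Fin N) → ℝ :=
        fun y => u y - c * ((d ^ 2 - ∑ i, (y i - x i) ^ 2) / 2) with hhdef
      have hmain : ∀ y ∈ closure (ball x d), 0 ≤ h y := by
        apply min_principle isOpen_ball isBounded_ball
        · exact (hu_cont.mono hballcl).sub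
            ((continuous_const.mul hWc.continuous).continuousOn)
        · exact ContDiffOn.sub (hu_C2.mono hball)
            ((contDiff_const.mul hWc).contDiffOn)
        · intro y hy
          rw [lap_sub_wfun hΩopen (hball hy) hu_C2 c x d]
          have hlap : laplacian u y = -(N:ℝ) := by
            have := hpde y (hball hy); linarith
          rw [hlap]
          have : c * (N:ℝ) < (N:ℝ) := by
            apply mul_lt_of_lt_one_left hNpos
            simp only [hcdef]
            linarith [hε.1]
          linarith
        · intro y hy
          rw [frontier_ball x hd.ne'] at hy
          have hsum : ∑ i, (y i - x i) ^ 2 = d ^ 2 := by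
            have hdist : dist y x = d := mem_sphere.mp hy
            have := EuclideanSpace.dist_eq y x
            rw [hdist] at this
            have hnn : 0 ≤ ∑ i, dist (y i) (x i) ^ 2 :=
              Finset.sum_nonneg fun i _ => sq_nonneg _
            have h2 : d ^ 2 = ∑ i, dist (y i) (x i) ^ 2 := by
              rw [this, sq, Real.mul_self_sqrt hnn]
            rw [h2]
            congr 1
            funext i
            rw [Real.dist_eq, sq_abs]
          have hycl : y ∈ closure Ω := hballcl (by
            rw [closure_ball x hd.ne']
            exact sphere_subset_closedBall hy)
          simp only [hhdef, hsum, sub_self, zero_div, mul_zero, sub_zero]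
          exact hu_nonneg y hycl
      have hx' : x ∈ closure (ball x d) := subset_closure (mem_ball_self hd)
      have h0 := hmain x hx'
      have hWx : ((d ^ 2 - ∑ i : Fin N, (x i - x i) ^ 2) / 2) = d ^ 2 / 2 := by simp
      simp only [hhdef] at h0
      rw [hWx] at h0
      linarith
    have htend : Tendsto (fun ε : ℝ => (1 - ε) * (d ^ 2 / 2)) (𝓝[>] (0:ℝ))
        (𝓝 ((1 - 0) * (d ^ 2 / 2))) := by
      apply Tendsto.mono_left _ nhdsWithin_le_nhds
      exact (Continuous.tendsto (by continuity) 0)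
    have hev : ∀ᶠ ε in 𝓝[>] (0:ℝ), (1 - ε) * (d ^ 2 / 2) ≤ u x := by
      filter_upwards [Ioo_mem_nhdsGT_of_mem (by constructor <;> norm_num : (0:ℝ) ∈ Ico (0:ℝ) 1)]
        with ε hε
      exact key ε hε
    have := le_of_tendsto htend hev
    simpa using this
end

section
/- Let Ω ⊂ ℝ^N be a bounded domain with mean convex C² boundary, and let u solve -Δu = N in Ω with u = 0 on ∂Ω, satisfying the gradient bound |∇u|² ≤ 2N(u(z) − u) on cl Ω where z is a global maximum point. Then √(u(z)) ≤ √(N/2)·d_Γ(z), and in particular u(z) ≤ (N/2)·r_Ω². -/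
open Metric Set
open scoped Classical

/-- The signed distance to the boundary of `Ω`: positive inside, negative outside. -/
noncomputable def signedBdryDist {N : ℕ} (Ω : Set (EuclideanSpace ℝ (Fin N)))
    (x : EuclideanSpace ℝ (Fin N)) : ℝ :=
  if x ∈ Ω then infDist x (frontier Ω) else -infDist x (frontier Ω)

/-- `Ω` has a mean convex `C²` boundary: the signed distance function is `C²` near the
boundary, and its Laplacian is nonpositive on the boundary.  (For a `C²` boundary,
`Δ d = -(N-1) M` on `Γ`, where `M` is the mean curvature with respect to the inward
normal, so this says `M ≥ 0`.) -/
def MeanConvexBoundary {N : ℕ} (Ω : Set (EuclideanSpace ℝ (Fin N))) : Prop :=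
  ∃ V : Set (EuclideanSpace ℝ (Fin N)), IsOpen V ∧ frontier Ω ⊆ V ∧
    ContDiffOn ℝ 2 (signedBdryDist Ω) V ∧
    ∀ y ∈ frontier Ω, laplacian (signedBdryDist Ω) y ≤ 0

/-- given the gradient bound `|∇u|² ≤ 2N(u(z) − u)` on `cl Ω`, one gets
`√(u(z)) ≤ √(N/2)·d_Γ(z)`, and in particular `u(z) ≤ (N/2)·r_Ω²`. -/
theorem stmt_3 {N : ℕ} (hN : 2 ≤ N) (Ω : Set (EuclideanSpace ℝ (Fin N)))
    (hΩopen : IsOpen Ω) (hΩconn : IsConnected Ω) (hΩbdd : Bornology.IsBounded Ω)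
    (hmc : MeanConvexBoundary Ω)
    (u : EuclideanSpace ℝ (Fin N) → ℝ)
    (hu_C1 : ContDiffOn ℝ 1 u (closure Ω))
    (hu_C2 : ContDiffOn ℝ 2 u Ω)
    (hpde : ∀ x ∈ Ω, -laplacian u x = (N : ℝ))
    (hbdry : ∀ x ∈ frontier Ω, u x = 0)
    (z : EuclideanSpace ℝ (Fin N)) (hz : z ∈ Ω)
    (hzmax : ∀ x ∈ closure Ω, u x ≤ u z)
    (hgrad : ∀ x ∈ closure Ω, ‖gradient u x‖ ^ 2 ≤ 2 * N * (u z - u x)) :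
    Real.sqrt (u z) ≤ Real.sqrt ((N : ℝ) / 2) * infDist z (frontier Ω) ∧
    u z ≤ ((N : ℝ) / 2) *
      (sSup ((fun x => infDist x (frontier Ω)) '' closure Ω)) ^ 2 := by
  haveI : Nonempty (Fin N) := ⟨⟨0, by omega⟩⟩
  -- frontier is nonempty, closed, compact
  have hfr_ne : (frontier Ω).Nonempty := by
    rw [nonempty_frontier_iff]
    refine ⟨⟨z, hz⟩, ?_⟩
    rintro rfl
    exact NormedSpace.unbounded_univ ℝ (EuclideanSpace ℝ (Fin N)) hΩbdd
  have hfr_bdd : Bornology.IsBounded (frontier Ω) :=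
    hΩbdd.closure.subset frontier_subset_closure
  have hfr_cpt : IsCompact (frontier Ω) :=
    Metric.isCompact_of_isClosed_isBounded isClosed_frontier hfr_bdd
  set d := infDist z (frontier Ω) with hd_def
  obtain ⟨y, hyfr, hdy⟩ := hfr_cpt.exists_infDist_eq_dist hfr_ne z
  have hz_not_fr : z ∉ frontier Ω := by
    rw [hΩopen.frontier_eq]; exact fun h => h.2 hz
  have hd_pos : 0 < d :=
    (isClosed_frontier.notMem_iff_infDist_pos hfr_ne).1 hz_not_fr
  have huy : u y = 0 := hbdry y hyfr
  have huz_nonneg : 0 ≤ u z := huy ▸ hzmax y (frontier_subset_closure hyfr)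
  -- the ball of radius d around z lies in Ω
  have hball : ball z d ⊆ Ω := by
    have hdisj : ∀ w ∈ ball z d, w ∉ frontier Ω := by
      intro w hw hwf
      have h1 : d ≤ dist z w := infDist_le_dist_of_mem hwf
      rw [mem_ball, dist_comm] at hw
      linarith
    refine IsPreconnected.subset_left_of_subset_union (v := interior Ωᶜ) hΩopen isOpen_interior
      ?_ ?_ ⟨z, mem_ball_self hd_pos, hz⟩ (convex_ball z d).isPreconnected
    · exact Set.disjoint_left.2 fun a ha hai => (interior_subset hai) ha
    · intro w hw
      by_cases hwΩ : w ∈ Ω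
      · exact Or.inl hwΩ
      · refine Or.inr ?_
        rw [interior_compl]
        intro hwc
        exact hdisj w hw (by rw [hΩopen.frontier_eq]; exact ⟨hwc, hwΩ⟩)
  -- the segment from z to y
  set γ : ℝ → EuclideanSpace ℝ (Fin N) := fun t => z + t • (y - z) with hγ_def
  have hyz_norm : ‖y - z‖ = d := by
    rw [← dist_eq_norm, dist_comm, ← hdy]
  have hγΩ : ∀ t ∈ Ico (0:ℝ) 1, γ t ∈ Ω := by
    intro t ht
    apply hball
    rw [mem_ball, hγ_def]
    simp only [dist_eq_norm, add_sub_cancel_left]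
    rw [norm_smul, hyz_norm, Real.norm_eq_abs, abs_of_nonneg ht.1]
    calc t * d < 1 * d := by
          exact mul_lt_mul_of_pos_right ht.2 hd_pos
    _ = d := one_mul d
  have hγ1 : γ 1 = y := by simp [hγ_def]
  have hγ0 : γ 0 = z := by simp [hγ_def]
  have hγcl : ∀ t ∈ Icc (0:ℝ) 1, γ t ∈ closure Ω := by
    intro t ht
    rcases lt_or_eq_of_le ht.2 with h1 | h1
    · exact subset_closure (hγΩ t ⟨ht.1, h1⟩)
    · rw [h1, hγ1]; exact frontier_subset_closure hyfr
  set h : ℝ → ℝ := fun t => u z - u (γ t) with hh_def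
  have hγcont : Continuous γ := by
    apply continuous_const.add
    exact continuous_id.smul continuous_const
  have hcont_h : ContinuousOn h (Icc 0 1) := by
    apply continuousOn_const.sub
    exact (hu_C1.continuousOn).comp hγcont.continuousOn hγcl
  have hh_nonneg : ∀ t ∈ Icc (0:ℝ) 1, 0 ≤ h t := fun t ht =>
    sub_nonneg.2 (hzmax _ (hγcl t ht))
  have hh0 : h 0 = 0 := by rw [hh_def]; simp [hγ0]
  have hh1 : h 1 = u z := by rw [hh_def]; simp [hγ1, huy]
  set h' : ℝ → ℝ := fun t => -(fderiv ℝ u (γ t) (y - z)) with hh'_def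
  -- derivative of h on [0,1)
  have hder : ∀ t ∈ Ico (0:ℝ) 1, HasDerivAt h (h' t) t := by
    intro t ht
    have hmem : γ t ∈ Ω := hγΩ t ht
    have hdiff : DifferentiableAt ℝ u (γ t) :=
      (hu_C2.contDiffAt (hΩopen.mem_nhds hmem)).differentiableAt two_ne_zero
    have hγder : HasDerivAt γ (y - z) t := by
      have h0 := ((hasDerivAt_id t).smul_const (y - z)).const_add z
      rw [one_smul] at h0
      exact h0
    have hcomp := hdiff.hasFDerivAt.comp_hasDerivAt t hγder
    refine ((hasDerivAt_const t (u z)).sub hcomp).congr_deriv ?_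
    simp [hh'_def]
  -- bound on |h'|
  have hc_nonneg : 0 ≤ Real.sqrt ((N:ℝ)/2) * d :=
    mul_nonneg (Real.sqrt_nonneg _) hd_pos.le
  have hsqrt2N : Real.sqrt (2 * (N:ℝ)) = 2 * Real.sqrt ((N:ℝ)/2) := by
    rw [show (2:ℝ) * N = 2^2 * ((N:ℝ)/2) by ring, Real.sqrt_mul (by positivity),
      Real.sqrt_sq (by norm_num)]
  have hh'_bound : ∀ t ∈ Ico (0:ℝ) 1,
      |h' t| ≤ Real.sqrt (2 * (N:ℝ) * h t) * d := by
    intro t ht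
    have hmemcl : γ t ∈ closure Ω := hγcl t ⟨ht.1, ht.2.le⟩
    have hgr : ‖gradient u (γ t)‖ ^ 2 ≤ 2 * (N:ℝ) * h t := hgrad _ hmemcl
    have hip : fderiv ℝ u (γ t) (y - z) = (inner ℝ (gradient u (γ t)) (y - z) : ℝ) := by
      rw [gradient, InnerProductSpace.toDual_symm_apply]
    rw [hh'_def]
    simp only [abs_neg, hip]
    calc |(inner ℝ (gradient u (γ t)) (y - z) : ℝ)| ≤ ‖gradient u (γ t)‖ * ‖y - z‖ :=
          abs_real_inner_le_norm _ _
      _ ≤ Real.sqrt (2 * (N:ℝ) * h t) * d := by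
          rw [hyz_norm]
          apply mul_le_mul_of_nonneg_right _ hd_pos.le
          have := Real.sqrt_le_sqrt hgr
          rwa [Real.sqrt_sq (norm_nonneg _)] at this
  -- the main estimate via an epsilon-regularized sqrt comparison
  have main : Real.sqrt (u z) ≤ Real.sqrt ((N:ℝ)/2) * d := by
    apply le_of_forall_pos_le_add
    intro ε hε
    set ψ : ℝ → ℝ := fun t => Real.sqrt (h t + ε^2) with hψ_def
    set ψ' : ℝ → ℝ := fun t => h' t / (2 * Real.sqrt (h t + ε^2)) with hψ'_def
    have hψ0 : ψ 0 = ε := by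
      rw [hψ_def]; simp [hh0, Real.sqrt_sq hε.le]
    -- for s < 1 : ψ s ≤ ε + c * s
    have key : ∀ s ∈ Ico (0:ℝ) 1, ψ s ≤ ε + Real.sqrt ((N:ℝ)/2) * d * s := by
      intro s hs
      have hsub : Icc (0:ℝ) s ⊆ Ico (0:ℝ) 1 := fun x hx => ⟨hx.1, lt_of_le_of_lt hx.2 hs.2⟩
      have hposε : ∀ x ∈ Icc (0:ℝ) s, 0 < h x + ε^2 := fun x hx =>
        add_pos_of_nonneg_of_pos (hh_nonneg x ⟨hx.1, ((hsub hx).2).le⟩) (by positivity)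
      have hfd : ∀ x ∈ Icc (0:ℝ) s, HasDerivWithinAt ψ (ψ' x) (Icc 0 s) x := by
        intro x hx
        have hdh : HasDerivAt (fun t => h t + ε^2) (h' x) x :=
          (hder x (hsub hx)).add_const _
        exact (hdh.sqrt (ne_of_gt (hposε x hx))).hasDerivWithinAt
      have hbound : ∀ x ∈ Ico (0:ℝ) s, ‖ψ' x‖ ≤ Real.sqrt ((N:ℝ)/2) * d := by
        intro x hx
        have hx' : x ∈ Icc (0:ℝ) s := ⟨hx.1, hx.2.le⟩
        have hhx : 0 ≤ h x := hh_nonneg x ⟨hx.1, ((hsub hx').2).le⟩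
        have hpos : 0 < Real.sqrt (h x + ε^2) := Real.sqrt_pos.2 (hposε x hx')
        rw [hψ'_def, Real.norm_eq_abs, abs_div, abs_of_pos (by positivity :
          (0:ℝ) < 2 * Real.sqrt (h x + ε^2)), div_le_iff₀ (by positivity)]
        calc |h' x| ≤ Real.sqrt (2 * (N:ℝ) * h x) * d := hh'_bound x (hsub hx')
          _ ≤ (Real.sqrt (2 * (N:ℝ)) * Real.sqrt (h x + ε^2)) * d := by
              apply mul_le_mul_of_nonneg_right _ hd_pos.le
              rw [← Real.sqrt_mul (by positivity)]
              apply Real.sqrt_le_sqrt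
              nlinarith [sq_nonneg ε]
          _ = Real.sqrt ((N:ℝ)/2) * d * (2 * Real.sqrt (h x + ε^2)) := by
              rw [hsqrt2N]; ring
      have := norm_image_sub_le_of_norm_deriv_le_segment' hfd hbound s
        (right_mem_Icc.2 hs.1)
      rw [Real.norm_eq_abs, sub_zero] at this
      have h2 : ψ s - ψ 0 ≤ Real.sqrt ((N:ℝ)/2) * d * s := le_trans (le_abs_self _) this
      rw [hψ0] at h2
      linarith
    -- pass to the limit s → 1⁻
    have hψ1 : ψ 1 ≤ ε + Real.sqrt ((N:ℝ)/2) * d := by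
      have hne : (nhdsWithin 1 (Ioo (0:ℝ) 1)).NeBot := right_nhdsWithin_Ioo_neBot one_pos
      have hcψ : ContinuousOn ψ (Icc 0 1) := by
        apply Real.continuous_sqrt.comp_continuousOn
        exact hcont_h.add continuousOn_const
      have htend : Filter.Tendsto ψ (nhdsWithin 1 (Ioo (0:ℝ) 1)) (nhds (ψ 1)) :=
        ((hcψ 1 (right_mem_Icc.2 zero_le_one)).mono
          (Ioo_subset_Icc_self : Ioo (0:ℝ) 1 ⊆ Icc 0 1))
      refine le_of_tendsto htend ?_
      filter_upwards [self_mem_nhdsWithin] with s hs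
      have := key s ⟨hs.1.le, hs.2⟩
      have hs1 : Real.sqrt ((N:ℝ)/2) * d * s ≤ Real.sqrt ((N:ℝ)/2) * d * 1 :=
        mul_le_mul_of_nonneg_left hs.2.le hc_nonneg
      linarith [this, hs1]
    calc Real.sqrt (u z) ≤ Real.sqrt (u z + ε^2) :=
          Real.sqrt_le_sqrt (by nlinarith [sq_nonneg ε])
      _ = ψ 1 := by simp only [hψ_def, hh1]
      _ ≤ Real.sqrt ((N:ℝ)/2) * d + ε := by linarith
  refine ⟨main, ?_⟩
  -- second conclusion
  have hsq : u z ≤ ((N:ℝ)/2) * d^2 := by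
    have := pow_le_pow_left₀ (Real.sqrt_nonneg (u z)) main 2
    rw [Real.sq_sqrt huz_nonneg] at this
    calc u z ≤ (Real.sqrt ((N:ℝ)/2) * d)^2 := this
      _ = ((N:ℝ)/2) * d^2 := by
          rw [mul_pow, Real.sq_sqrt (by positivity)]
  set R := sSup ((fun x => infDist x (frontier Ω)) '' closure Ω) with hR_def
  have hdR : d ≤ R := by
    obtain ⟨r, hr⟩ := hΩbdd.closure.subset_closedBall y
    apply le_csSup
    · refine ⟨r, ?_⟩
      rintro v ⟨x, hxcl, rfl⟩
      calc infDist x (frontier Ω) ≤ dist x y := infDist_le_dist_of_mem hyfr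
        _ ≤ r := by simpa [Metric.mem_closedBall] using hr hxcl
    · exact ⟨z, subset_closure hz, rfl⟩
  calc u z ≤ ((N:ℝ)/2) * d^2 := hsq
    _ ≤ ((N:ℝ)/2) * R^2 := by
        apply mul_le_mul_of_nonneg_left _ (by positivity)
        exact pow_le_pow_left₀ hd_pos.le hdR 2
end

section
/- Let Ω ⊂ ℝ^N be a bounded convex domain with John's ellipsoid E_a(c) (the ellipsoid of maximal volume contained in Ω, with semi-axes a_1 ≤ … ≤ a_N). Let u solve -Δu = N in Ω, u = 0 on ∂Ω, and suppose the gradient bound |∇u|² ≤ 2N(u(z) − u) holds, where z is the maximum point of u. Then d_Γ(z) ≥ m_{−2}(a)/√N, where m_{−2}(a) = ( (1/N) Σ_{i=1}^N a_i^{−2} )^{−1/2}. -/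
open Metric Set MeasureTheory Filter Topology

/-- The open ellipsoid with center `c` and semi-axes `a i`. -/
def Ellipsoid {N : ℕ} (a : Fin N → ℝ) (c : EuclideanSpace ℝ (Fin N)) :
    Set (EuclideanSpace ℝ (Fin N)) :=
  {y | ∑ i, ((y i - c i) / a i) ^ 2 < 1}

lemma aux1d {φ φ' : ℝ → ℝ} {s : ℝ} {T : Set ℝ} (hT : IsOpen T) (h0 : (0:ℝ) ∈ T)
    (hφ : ∀ t ∈ T, HasDerivAt φ (φ' t) t)
    (hφ' : HasDerivAt φ' s 0) (hmax : IsLocalMax φ 0) : s ≤ 0 := by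
  by_contra hs
  push_neg at hs
  have h00 : φ' 0 = 0 := hmax.hasDerivAt_eq_zero (hφ 0 h0)
  -- slope of φ' tends to s
  have hslope : Tendsto (slope φ' 0) (𝓝[≠] 0) (𝓝 s) :=
    hasDerivAt_iff_tendsto_slope.1 hφ'
  have hev : ∀ᶠ t in 𝓝[≠] (0:ℝ), 0 < slope φ' 0 t :=
    hslope.eventually (eventually_gt_nhds hs)
  rw [eventually_nhdsWithin_iff, Metric.eventually_nhds_iff] at hev
  obtain ⟨δ₃, hδ₃, hslope_pos⟩ := hev
  obtain ⟨δ₁, hδ₁, hmax'⟩ := Metric.eventually_nhds_iff.1 hmax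
  obtain ⟨δ₂, hδ₂, hball⟩ := Metric.isOpen_iff.1 hT 0 h0
  set t := min (min δ₁ δ₂) δ₃ / 2 with ht
  have htpos : 0 < t := by positivity
  have htlt : ∀ ξ ∈ Icc (0:ℝ) t, ξ ∈ T := by
    intro ξ hξ
    apply hball
    simp only [mem_ball, Real.dist_eq, abs_sub_comm, sub_zero]
    rw [abs_of_nonneg hξ.1]
    calc ξ ≤ t := hξ.2
      _ < δ₂ := by
        have : min (min δ₁ δ₂) δ₃ ≤ δ₂ := le_trans (min_le_left _ _) (min_le_right _ _)
        linarith
  have hpos : ∀ ξ ∈ Ioo (0:ℝ) t, 0 < φ' ξ := by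
    intro ξ hξ
    have h1 : 0 < slope φ' 0 ξ := by
      apply hslope_pos (y := ξ) ?_ ?_
      · simp only [Real.dist_eq, sub_zero]
        rw [abs_of_nonneg hξ.1.le]
        have h5 : min (min δ₁ δ₂) δ₃ ≤ δ₃ := min_le_right _ _
        have h6 := hξ.2; simp only [ht] at h6 ⊢; linarith
      · simp only [mem_compl_iff, mem_singleton_iff]; exact ne_of_gt hξ.1
    have heq : slope φ' 0 ξ = φ' ξ / ξ := by
      simp [slope_def_field, h00]
    rw [heq] at h1
    rcases div_pos_iff.1 h1 with ⟨hnum, _⟩ | ⟨_, hden⟩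
    · exact hnum
    · linarith [hξ.1]
  -- MVT
  obtain ⟨ξ, hξ, hξeq⟩ := exists_hasDerivAt_eq_slope φ φ' htpos
    (fun x hx => ((hφ x (htlt x hx)).continuousAt.continuousWithinAt))
    (fun x hx => hφ x (htlt x ⟨hx.1.le, hx.2.le⟩))
  have h2 : 0 < (φ t - φ 0) / (t - 0) := hξeq ▸ hpos ξ hξ
  have h3 : φ t ≤ φ 0 := by
    apply hmax'
    simp only [Real.dist_eq, sub_zero]
    rw [abs_of_nonneg htpos.le]
    have : min (min δ₁ δ₂) δ₃ ≤ δ₁ := le_trans (min_le_left _ _) (min_le_left _ _)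
    simp only [ht]; linarith
  rw [sub_zero] at h2
  have := div_pos_iff.1 h2
  rcases this with ⟨h4, _⟩ | ⟨_, h5⟩
  · linarith
  · linarith

lemma lap_nonpos {N : ℕ} {h : EuclideanSpace ℝ (Fin N) → ℝ}
    {U : Set (EuclideanSpace ℝ (Fin N))} (hU : IsOpen U)
    {m : EuclideanSpace ℝ (Fin N)} (hm : m ∈ U)
    (hd1 : ∀ y ∈ U, DifferentiableAt ℝ h y)
    (hd2 : ∀ j : Fin N, DifferentiableAt ℝ
      (fun y => fderiv ℝ h y (EuclideanSpace.single j 1)) m)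
    (hmax : IsLocalMax h m) : laplacian h m ≤ 0 := by
  apply Finset.sum_nonpos
  intro j _
  set v : EuclideanSpace ℝ (Fin N) := EuclideanSpace.single j 1 with hv
  set L : ℝ → EuclideanSpace ℝ (Fin N) := fun t => m + t • v with hLdef
  have hL : ∀ t, HasDerivAt L v t := by
    intro t
    have : HasDerivAt (fun t : ℝ => t • v) ((1:ℝ) • v) t := (hasDerivAt_id t).smul_const v
    simpa [hLdef] using this.const_add m
  have hL0 : L 0 = m := by simp [hLdef]
  have hLc : Continuous L := by
    have := (hL 0).continuousAt
    exact continuous_const.add (continuous_id.smul continuous_const)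
  have hT : IsOpen (L ⁻¹' U) := hU.preimage hLc
  have h0T : (0:ℝ) ∈ L ⁻¹' U := by simp [mem_preimage, hL0, hm]
  refine aux1d hT h0T (φ := h ∘ L) (φ' := fun t => fderiv ℝ h (L t) v) ?_ ?_ ?_
  · intro t ht
    exact (hd1 (L t) ht).hasFDerivAt.comp_hasDerivAt t (hL t)
  · have hl : HasFDerivAt (fun y => fderiv ℝ h y v)
        (fderiv ℝ (fun y => fderiv ℝ h y v) m) (L 0) := by
      rw [hL0]; exact (hd2 j).hasFDerivAt
    exact hl.comp_hasDerivAt 0 (hL 0)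
  · have hl : IsLocalMax h (L 0) := by rw [hL0]; exact hmax
    exact hl.comp_continuous hLc.continuousAt

lemma core_max {N : ℕ} {U : Set (EuclideanSpace ℝ (Fin N))} (hU : IsOpen U)
    (hbdd : Bornology.IsBounded U) {h : EuclideanSpace ℝ (Fin N) → ℝ}
    (hc : ContinuousOn h (closure U)) {x₀ : EuclideanSpace ℝ (Fin N)} (hx₀ : x₀ ∈ U)
    (hno : ∀ m ∈ U, IsLocalMax h m → False) :
    ∃ y ∈ frontier U, h x₀ ≤ h y := by
  have hcpt : IsCompact (closure U) :=
    Metric.isCompact_of_isClosed_isBounded isClosed_closure hbdd.closure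
  obtain ⟨m, hm, hmax⟩ := hcpt.exists_isMaxOn ⟨x₀, subset_closure hx₀⟩ hc
  by_cases hmU : m ∈ U
  · exfalso
    apply hno m hmU
    refine Filter.eventually_iff_exists_mem.2
      ⟨closure U, mem_of_superset (hU.mem_nhds hmU) subset_closure, fun y hy => hmax hy⟩
  · refine ⟨m, ?_, hmax (subset_closure hx₀)⟩
    rw [frontier_eq_closure_inter_closure]
    exact ⟨hm, by rwa [hU.isClosed_compl.closure_eq]⟩

noncomputable def Fq {N : ℕ} (b : Fin N → ℝ) (k : ℝ) (c : EuclideanSpace ℝ (Fin N))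
    (x : EuclideanSpace ℝ (Fin N)) : ℝ := k + ∑ i, b i * (x i - c i) ^ 2

lemma Fq_hasFDerivAt {N : ℕ} (b : Fin N → ℝ) (k : ℝ) (c : EuclideanSpace ℝ (Fin N))
    (x : EuclideanSpace ℝ (Fin N)) :
    HasFDerivAt (Fq b k c)
      (∑ i, (2 * b i * (x i - c i)) •
        (EuclideanSpace.proj i : EuclideanSpace ℝ (Fin N) →L[ℝ] ℝ)) x := by
  have h1 : ∀ i : Fin N, HasFDerivAt (fun y : EuclideanSpace ℝ (Fin N) => b i * (y i - c i) ^ 2)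
      ((2 * b i * (x i - c i)) • (EuclideanSpace.proj i : EuclideanSpace ℝ (Fin N) →L[ℝ] ℝ)) x := by
    intro i
    have hp : HasFDerivAt (fun y : EuclideanSpace ℝ (Fin N) => y i - c i)
        (EuclideanSpace.proj i : EuclideanSpace ℝ (Fin N) →L[ℝ] ℝ) x :=
      (EuclideanSpace.proj i : EuclideanSpace ℝ (Fin N) →L[ℝ] ℝ).hasFDerivAt.sub_const (c i)
    have hfun : (fun y : EuclideanSpace ℝ (Fin N) => b i * (y i - c i) ^ 2)
        = fun y => b i * ((y i - c i) * (y i - c i)) := by funext y; ring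
    rw [hfun]
    have := (hp.mul hp).const_mul (b i)
    refine this.congr_fderiv ?_
    ext w
    simp [ContinuousLinearMap.smul_apply]
    ring
  have := HasFDerivAt.fun_sum (fun i (_ : i ∈ Finset.univ) => h1 i)
  have h2 := this.const_add k
  exact h2

lemma Fq_fderiv_dir {N : ℕ} (b : Fin N → ℝ) (k : ℝ) (c : EuclideanSpace ℝ (Fin N))
    (x : EuclideanSpace ℝ (Fin N)) (j : Fin N) :
    fderiv ℝ (Fq b k c) x (EuclideanSpace.single j 1) = 2 * b j * (x j - c j) := by
  rw [(Fq_hasFDerivAt b k c x).fderiv]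
  rw [ContinuousLinearMap.sum_apply]
  have : ∀ i : Fin N, ((2 * b i * (x i - c i)) •
      (EuclideanSpace.proj i : EuclideanSpace ℝ (Fin N) →L[ℝ] ℝ))
      (EuclideanSpace.single j 1) = if i = j then 2 * b i * (x i - c i) else 0 := by
    intro i
    simp [EuclideanSpace.single_apply]
  rw [Finset.sum_congr rfl (fun i _ => this i)]
  simp

lemma Fq_continuous {N : ℕ} (b : Fin N → ℝ) (k : ℝ) (c : EuclideanSpace ℝ (Fin N)) :
    Continuous (Fq b k c) := by
  unfold Fq
  fun_prop

lemma Fq_nonneg {N : ℕ} (c : EuclideanSpace ℝ (Fin N)) (x : EuclideanSpace ℝ (Fin N)) :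
    0 ≤ Fq (fun _ => 1) 0 c x := by
  unfold Fq
  positivity

lemma diff_fderiv_apply {N : ℕ} {u : EuclideanSpace ℝ (Fin N) → ℝ}
    {U : Set (EuclideanSpace ℝ (Fin N))} (hU : IsOpen U) (hu : ContDiffOn ℝ 2 u U)
    {x : EuclideanSpace ℝ (Fin N)} (hx : x ∈ U) (v : EuclideanSpace ℝ (Fin N)) :
    DifferentiableAt ℝ (fun y => fderiv ℝ u y v) x := by
  have h1 : ContDiffOn ℝ 1 (fderiv ℝ u) U := hu.fderiv_of_isOpen hU (by norm_num)
  have h2 : DifferentiableAt ℝ (fderiv ℝ u) x :=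
    (h1.differentiableOn (by norm_num)).differentiableAt (hU.mem_nhds hx)
  exact h2.clm_apply (differentiableAt_const v)

lemma aux_lin {N : ℕ} (r : ℝ) (c : EuclideanSpace ℝ (Fin N)) (j : Fin N)
    (y : EuclideanSpace ℝ (Fin N)) :
    HasFDerivAt (fun y : EuclideanSpace ℝ (Fin N) => r * (y j - c j))
      (r • (EuclideanSpace.proj j : EuclideanSpace ℝ (Fin N) →L[ℝ] ℝ)) y :=
  (((EuclideanSpace.proj j : EuclideanSpace ℝ (Fin N) →L[ℝ] ℝ).hasFDerivAt.sub_const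
    (c j)).const_mul r)

lemma lap_Fq_sub {N : ℕ} (b : Fin N → ℝ) (k : ℝ) (c : EuclideanSpace ℝ (Fin N))
    {u : EuclideanSpace ℝ (Fin N) → ℝ} {U : Set (EuclideanSpace ℝ (Fin N))}
    (hU : IsOpen U) (hu : ContDiffOn ℝ 2 u U) {x : EuclideanSpace ℝ (Fin N)} (hx : x ∈ U) :
    laplacian (fun y => Fq b k c y - u y) x = (∑ i, 2 * b i) - laplacian u x := by
  unfold laplacian
  rw [← Finset.sum_sub_distrib]
  apply Finset.sum_congr rfl
  intro j _
  have hdu : ∀ y ∈ U, DifferentiableAt ℝ u y := fun y hy =>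
    (hu.differentiableOn (by norm_num)).differentiableAt (hU.mem_nhds hy)
  have hev : (fun y => fderiv ℝ (fun y' => Fq b k c y' - u y') y (EuclideanSpace.single j 1))
      =ᶠ[𝓝 x] (fun y => 2 * b j * (y j - c j) - fderiv ℝ u y (EuclideanSpace.single j 1)) := by
    filter_upwards [hU.mem_nhds hx] with y hy
    rw [fderiv_fun_sub (Fq_hasFDerivAt b k c y).differentiableAt (hdu y hy),
      ContinuousLinearMap.sub_apply, Fq_fderiv_dir]
  rw [hev.fderiv_eq]
  have hd2 : DifferentiableAt ℝ (fun y => fderiv ℝ u y (EuclideanSpace.single j 1)) x :=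
    diff_fderiv_apply hU hu hx _
  have hdF : DifferentiableAt ℝ (fun y : EuclideanSpace ℝ (Fin N) => 2 * b j * (y j - c j)) x :=
    (aux_lin (2 * b j) c j x).differentiableAt
  rw [fderiv_fun_sub hdF hd2, ContinuousLinearMap.sub_apply, (aux_lin (2 * b j) c j x).fderiv]
  simp [EuclideanSpace.single_apply]

lemma comp_max {N : ℕ} {Ω U : Set (EuclideanSpace ℝ (Fin N))} (hΩ : IsOpen Ω)
    (hUopen : IsOpen U) (hUbdd : Bornology.IsBounded U) (hsub : U ⊆ Ω)
    {u : EuclideanSpace ℝ (Fin N) → ℝ} (hu_cont : ContinuousOn u (closure Ω))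
    (hu : ContDiffOn ℝ 2 u Ω) (hpde : ∀ x ∈ Ω, -laplacian u x = (N : ℝ))
    (b : Fin N → ℝ) (k : ℝ) (c : EuclideanSpace ℝ (Fin N))
    (hb : 0 < (∑ i, 2 * b i) + N) {x₀ : EuclideanSpace ℝ (Fin N)} (hx₀ : x₀ ∈ U) :
    ∃ y ∈ frontier U, Fq b k c x₀ - u x₀ ≤ Fq b k c y - u y := by
  apply core_max hUopen hUbdd
    ((Fq_continuous b k c).continuousOn.sub (hu_cont.mono (closure_mono hsub))) hx₀
  intro m hm hmax
  have hdu : ∀ y ∈ Ω, DifferentiableAt ℝ u y := fun y hy =>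
    (hu.differentiableOn (by norm_num)).differentiableAt (hΩ.mem_nhds hy)
  have hlap : laplacian (fun y => Fq b k c y - u y) m = (∑ i, 2 * b i) - laplacian u m :=
    lap_Fq_sub b k c hΩ hu (hsub hm)
  have hpde' : laplacian u m = -(N : ℝ) := by linarith [hpde m (hsub hm)]
  have hd1 : ∀ y ∈ U, DifferentiableAt ℝ (fun y' => Fq b k c y' - u y') y := fun y hy =>
    (Fq_hasFDerivAt b k c y).differentiableAt.sub (hdu y (hsub hy))
  have hd2 : ∀ j : Fin N, DifferentiableAt ℝ
      (fun y => fderiv ℝ (fun y' => Fq b k c y' - u y') y (EuclideanSpace.single j 1)) m := by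
    intro j
    have hev : (fun y => 2 * b j * (y j - c j) - fderiv ℝ u y (EuclideanSpace.single j 1))
        =ᶠ[𝓝 m] (fun y => fderiv ℝ (fun y' => Fq b k c y' - u y') y
          (EuclideanSpace.single j 1)) := by
      filter_upwards [hΩ.mem_nhds (hsub hm)] with y hy
      rw [fderiv_fun_sub (Fq_hasFDerivAt b k c y).differentiableAt (hdu y hy),
        ContinuousLinearMap.sub_apply, Fq_fderiv_dir]
    exact ((aux_lin (2 * b j) c j m).differentiableAt.sub
      (diff_fderiv_apply hΩ hu (hsub hm) _)).congr_of_eventuallyEq hev.symm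
  have := lap_nonpos hUopen hm hd1 hd2 hmax
  rw [hlap, hpde'] at this
  linarith

lemma frontier_ne {N : ℕ} (hN : 2 ≤ N) {Ω : Set (EuclideanSpace ℝ (Fin N))}
    (hne : Ω.Nonempty) (hbdd : Bornology.IsBounded Ω) : (frontier Ω).Nonempty := by
  by_contra h
  rw [not_nonempty_iff_eq_empty] at h
  have h1 : IsClopen Ω := isClopen_iff_frontier_eq_empty.2 h
  have h2 : Ω = univ := (isClopen_iff.1 h1).resolve_left (Nonempty.ne_empty hne)
  haveI : Nonempty (Fin N) := ⟨⟨0, by omega⟩⟩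
  haveI : Nontrivial (EuclideanSpace ℝ (Fin N)) := inferInstance
  exact NormedSpace.unbounded_univ ℝ (EuclideanSpace ℝ (Fin N)) (h2 ▸ hbdd)

lemma eps_le {A M : ℝ} (hM : 0 ≤ M) (h : ∀ ε : ℝ, 0 < ε → A ≤ ε * M) : A ≤ 0 := by
  by_contra h'
  push_neg at h'
  have h2 := h (A / (2 * (M + 1))) (by positivity)
  have h3 : 0 < M + 1 := by linarith
  rw [div_mul_eq_mul_div, le_div_iff₀ (by positivity)] at h2
  nlinarith

lemma Fq_smul {N : ℕ} (ε : ℝ) (c x : EuclideanSpace ℝ (Fin N)) :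
    Fq (fun _ => ε) 0 c x = ε * Fq (fun _ => 1) 0 c x := by
  simp [Fq, Finset.mul_sum]

lemma u_nonneg {N : ℕ} (hN : 2 ≤ N) {Ω : Set (EuclideanSpace ℝ (Fin N))}
    (hΩopen : IsOpen Ω) (hΩne : Ω.Nonempty) (hΩbdd : Bornology.IsBounded Ω)
    {u : EuclideanSpace ℝ (Fin N) → ℝ} (hu_cont : ContinuousOn u (closure Ω))
    (hu_C2 : ContDiffOn ℝ 2 u Ω) (hpde : ∀ x ∈ Ω, -laplacian u x = (N : ℝ))
    (hbdry : ∀ x ∈ frontier Ω, u x = 0) :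
    ∀ x ∈ closure Ω, 0 ≤ u x := by
  have hNpos : (0:ℝ) < N := by exact_mod_cast Nat.lt_of_lt_of_le Nat.zero_lt_two hN
  have hfne := frontier_ne hN hΩne hΩbdd
  have hfcpt : IsCompact (frontier Ω) :=
    Metric.isCompact_of_isClosed_isBounded isClosed_frontier
      (hΩbdd.closure.subset frontier_subset_closure)
  set q : EuclideanSpace ℝ (Fin N) → ℝ := Fq (fun _ => 1) 0 0 with hq
  obtain ⟨ymax, hymax, hMmax⟩ := hfcpt.exists_isMaxOn hfne (Fq_continuous _ _ _).continuousOn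
  set M := q ymax with hMdef
  have hM0 : 0 ≤ M := Fq_nonneg 0 ymax
  have key : ∀ x ∈ Ω, 0 ≤ u x := by
    intro x hx
    have hforall : ∀ ε : ℝ, 0 < ε → -u x ≤ ε * M := by
      intro ε hε
      obtain ⟨y, hy, hle⟩ := comp_max hΩopen hΩopen hΩbdd subset_rfl hu_cont hu_C2 hpde
        (fun _ => ε) 0 0 (by
          rw [Finset.sum_const]
          simp only [Finset.card_univ, Fintype.card_fin, nsmul_eq_mul]
          nlinarith) hx
      have huy : u y = 0 := hbdry y hy
      rw [huy, sub_zero, Fq_smul ε 0 x, Fq_smul ε 0 y] at hle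
      have hqx : 0 ≤ Fq (fun _ => (1:ℝ)) 0 0 x := Fq_nonneg 0 x
      have hqy : Fq (fun _ => (1:ℝ)) 0 0 y ≤ M := hMmax hy
      nlinarith
    linarith [eps_le hM0 hforall]
  intro x hx
  have hdec : closure Ω ⊆ Ω ∪ frontier Ω := by
    intro y hy
    by_cases hyΩ : y ∈ Ω
    · exact Or.inl hyΩ
    · exact Or.inr ⟨hy, by rwa [hΩopen.interior_eq]⟩
  rcases hdec hx with h | h
  · exact key x h
  · rw [hbdry x h]

lemma u_center {N : ℕ} (hN : 2 ≤ N) {Ω : Set (EuclideanSpace ℝ (Fin N))}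
    (hΩopen : IsOpen Ω) (hΩne : Ω.Nonempty) (hΩbdd : Bornology.IsBounded Ω)
    (a : Fin N → ℝ) (ha : ∀ i, 0 < a i) (c : EuclideanSpace ℝ (Fin N))
    (hJohnSub : Ellipsoid a c ⊆ Ω)
    {u : EuclideanSpace ℝ (Fin N) → ℝ} (hu_cont : ContinuousOn u (closure Ω))
    (hu_C2 : ContDiffOn ℝ 2 u Ω) (hpde : ∀ x ∈ Ω, -laplacian u x = (N : ℝ))
    (hbdry : ∀ x ∈ frontier Ω, u x = 0) :
    (N : ℝ) / (2 * ∑ i, (a i ^ 2)⁻¹) ≤ u c := by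
  have hNpos : (0:ℝ) < N := by exact_mod_cast Nat.lt_of_lt_of_le Nat.zero_lt_two hN
  haveI : Nonempty (Fin N) := ⟨⟨0, by omega⟩⟩
  set S := ∑ i, (a i ^ 2)⁻¹ with hS
  have hSpos : 0 < S := Finset.sum_pos (fun i _ => by have := ha i; positivity)
    Finset.univ_nonempty
  set lam := (N : ℝ) / (2 * S) with hlam
  have hlampos : 0 < lam := by positivity
  set E := Ellipsoid a c with hE
  have hf : Continuous (fun y : EuclideanSpace ℝ (Fin N) => ∑ i, ((y i - c i) / a i) ^ 2) := by
    fun_prop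
  have hEopen : IsOpen E := isOpen_lt hf continuous_const
  have hcE : c ∈ E := by simp [hE, Ellipsoid]
  have hEbdd := hΩbdd.subset hJohnSub
  have hEne : E.Nonempty := ⟨c, hcE⟩
  have hfrE : ∀ y ∈ frontier E, (∑ i, ((y i - c i) / a i) ^ 2) = 1 := by
    intro y hy
    have h2 : (∑ i, ((y i - c i) / a i) ^ 2) ≤ 1 := by
      have hcl : closure E ⊆ {w : EuclideanSpace ℝ (Fin N) | ∑ i, ((w i - c i) / a i) ^ 2 ≤ 1} := by
        apply closure_minimal ?_ (isClosed_le hf continuous_const)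
        intro w hw
        simp only [hE, Ellipsoid, mem_setOf_eq] at hw
        exact le_of_lt hw
      exact hcl hy.1
    have h3 : y ∉ E := by
      intro hyE
      exact hy.2 (by rwa [hEopen.interior_eq])
    exact le_antisymm h2 (not_lt.1 h3)
  have hfne : (frontier E).Nonempty := frontier_ne hN hEne hEbdd
  have hfcpt : IsCompact (frontier E) :=
    Metric.isCompact_of_isClosed_isBounded isClosed_frontier
      (hEbdd.closure.subset frontier_subset_closure)
  obtain ⟨ymax, hymax, hMmax⟩ := hfcpt.exists_isMaxOn hfne
    (Fq_continuous (fun _ => 1) 0 c).continuousOn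
  set M := Fq (fun _ => 1) 0 c ymax with hMdef
  have hM0 : 0 ≤ M := Fq_nonneg c ymax
  have hforall : ∀ ε : ℝ, 0 < ε → lam - u c ≤ ε * M := by
    intro ε hε
    set b : Fin N → ℝ := fun i => ε - lam * (a i ^ 2)⁻¹ with hb
    have hsum : (∑ i, 2 * b i) + N = 2 * N * ε := by
      have hterm : ∀ i : Fin N, 2 * b i = 2 * ε - 2 * lam * (a i ^ 2)⁻¹ := fun i => by
        simp [hb]; ring
      rw [Finset.sum_congr rfl (fun i _ => hterm i), Finset.sum_sub_distrib,
        Finset.sum_const, ← Finset.mul_sum]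
      simp only [Finset.card_univ, Fintype.card_fin, nsmul_eq_mul]
      have hlamS : lam * S = N / 2 := by
        rw [hlam]; field_simp
      rw [← hS, mul_assoc, hlamS]
      ring
    obtain ⟨y, hy, hle⟩ := comp_max hΩopen hEopen hEbdd hJohnSub hu_cont hu_C2 hpde
      b lam c (by rw [hsum]; positivity) hcE
    have hFc : Fq b lam c c = lam := by simp [Fq]
    have h1 : ∑ i, (a i ^ 2)⁻¹ * (y i - c i) ^ 2 = 1 := by
      rw [← hfrE y hy]
      apply Finset.sum_congr rfl
      intro i _
      rw [div_pow]
      ring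
    have hFy : Fq b lam c y = ε * Fq (fun _ => 1) 0 c y := by
      have hterm : ∀ i : Fin N, b i * (y i - c i) ^ 2
          = ε * (y i - c i) ^ 2 - lam * ((a i ^ 2)⁻¹ * (y i - c i) ^ 2) := fun i => by
        simp [hb]; ring
      unfold Fq
      rw [Finset.sum_congr rfl (fun i _ => hterm i), Finset.sum_sub_distrib,
        ← Finset.mul_sum, ← Finset.mul_sum, h1]
      simp only [one_mul, zero_add, mul_one]
      ring
    have huy : 0 ≤ u y := by
      apply u_nonneg hN hΩopen hΩne hΩbdd hu_cont hu_C2 hpde hbdry y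
      exact closure_mono hJohnSub (frontier_subset_closure hy)
    have hqy : Fq (fun _ => 1) 0 c y ≤ M := hMmax hy
    rw [hFc, hFy] at hle
    nlinarith
  have := eps_le hM0 hforall
  rw [hlam] at this
  linarith

lemma step_A {N : ℕ} (hN : 2 ≤ N) {Ω : Set (EuclideanSpace ℝ (Fin N))}
    (hΩopen : IsOpen Ω) (hΩconv : Convex ℝ Ω)
    {u : EuclideanSpace ℝ (Fin N) → ℝ} (hu_cont : ContinuousOn u (closure Ω))
    (hu_C2 : ContDiffOn ℝ 2 u Ω)
    (hbdry : ∀ x ∈ frontier Ω, u x = 0)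
    {z : EuclideanSpace ℝ (Fin N)} (hz : z ∈ Ω)
    (hzmax : ∀ x ∈ closure Ω, u x ≤ u z)
    (hgrad : ∀ x ∈ closure Ω, ‖gradient u x‖ ^ 2 ≤ 2 * N * (u z - u x))
    {y : EuclideanSpace ℝ (Fin N)} (hy : y ∈ frontier Ω) :
    Real.sqrt (u z) ≤ Real.sqrt (2 * N) * ‖y - z‖ / 2 := by
  have hNpos : (0:ℝ) < N := by exact_mod_cast Nat.lt_of_lt_of_le Nat.zero_lt_two hN
  set L : ℝ := ‖y - z‖ with hL
  set C : ℝ := Real.sqrt (2 * N) * L / 2 with hC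
  set γ : ℝ → EuclideanSpace ℝ (Fin N) := fun t => z + t • (y - z) with hγ
  have hγ0 : γ 0 = z := by simp [hγ]
  have hγ1 : γ 1 = y := by simp [hγ]
  have hγcont : Continuous γ := by fun_prop
  have hγcl : ∀ t ∈ Icc (0:ℝ) 1, γ t ∈ closure Ω := by
    intro t ht
    have heq : γ t = (1 - t) • z + t • y := by simp [hγ]; module
    rw [heq]
    exact hΩconv.closure ((subset_closure) hz) (frontier_subset_closure hy)
      (by linarith [ht.1, ht.2]) ht.1 (by ring)
  have hγΩ : ∀ t ∈ Ico (0:ℝ) 1, γ t ∈ Ω := by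
    intro t ht
    have heq : γ t = (1 - t) • z + t • y := by simp [hγ]; module
    rw [heq, ← hΩopen.interior_eq]
    exact hΩconv.combo_interior_closure_mem_interior (hΩopen.interior_eq.symm ▸ hz)
      (frontier_subset_closure hy) (by linarith [ht.2]) ht.1 (by ring)
  set v : ℝ → ℝ := fun t => u z - u (γ t) with hv
  have hvcont : ContinuousOn v (Icc 0 1) :=
    continuousOn_const.sub (hu_cont.comp hγcont.continuousOn hγcl)
  have hvnonneg : ∀ t ∈ Icc (0:ℝ) 1, 0 ≤ v t := fun t ht =>
    sub_nonneg.2 (hzmax _ (hγcl t ht))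
  have hvderiv : ∀ t ∈ Ico (0:ℝ) 1,
      HasDerivAt v (-(fderiv ℝ u (γ t) (y - z))) t := by
    intro t ht
    have hγd : HasDerivAt γ (y - z) t := by
      have : HasDerivAt (fun s : ℝ => s • (y - z)) ((1:ℝ) • (y - z)) t :=
        (hasDerivAt_id t).smul_const (y - z)
      simpa [hγ] using this.const_add z
    have hud : DifferentiableAt ℝ u (γ t) :=
      (hu_C2.differentiableOn (by norm_num)).differentiableAt (hΩopen.mem_nhds (hγΩ t ht))
    exact (hud.hasFDerivAt.comp_hasDerivAt t hγd).const_sub (u z)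
  have hvd_bound : ∀ t ∈ Ico (0:ℝ) 1,
      -(fderiv ℝ u (γ t) (y - z)) ≤ Real.sqrt (2 * N * v t) * L := by
    intro t ht
    have hmem := hγcl t ⟨ht.1, ht.2.le⟩
    have hinner : fderiv ℝ u (γ t) (y - z) = inner ℝ (gradient u (γ t)) (y - z) := by
      rw [gradient]
      rw [InnerProductSpace.toDual_symm_apply]
    have h1 : |fderiv ℝ u (γ t) (y - z)| ≤ ‖gradient u (γ t)‖ * L := by
      rw [hinner]
      exact (abs_real_inner_le_norm _ _)
    have h2 : ‖gradient u (γ t)‖ ≤ Real.sqrt (2 * N * v t) := by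
      have := hgrad _ hmem
      have h3 : ‖gradient u (γ t)‖ = Real.sqrt (‖gradient u (γ t)‖ ^ 2) :=
        (Real.sqrt_sq (norm_nonneg _)).symm
      rw [h3]
      exact Real.sqrt_le_sqrt this
    calc -(fderiv ℝ u (γ t) (y - z)) ≤ |fderiv ℝ u (γ t) (y - z)| := neg_le_abs _
      _ ≤ ‖gradient u (γ t)‖ * L := h1
      _ ≤ Real.sqrt (2 * N * v t) * L :=
          mul_le_mul_of_nonneg_right h2 (norm_nonneg _)
  -- main inequality with ε
  have hmain : ∀ ε : ℝ, 0 < ε → Real.sqrt (u z + ε) ≤ Real.sqrt ε + C := by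
    intro ε hε
    set ψ : ℝ → ℝ := fun t => Real.sqrt (v t + ε) - C * t with hψ
    have hψderiv : ∀ t ∈ Ioo (0:ℝ) 1, HasDerivAt ψ
        (1 / (2 * Real.sqrt (v t + ε)) * (-(fderiv ℝ u (γ t) (y - z))) - C) t := by
      intro t ht
      have hvt : 0 < v t + ε := by
        have := hvnonneg t ⟨ht.1.le, ht.2.le⟩; linarith
      have hvd := (hvderiv t ⟨ht.1.le, ht.2⟩).add_const ε
      have hsq := (Real.hasDerivAt_sqrt (ne_of_gt hvt)).comp t hvd
      have hlin : HasDerivAt (fun t : ℝ => C * t) C t := by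
        simpa using (hasDerivAt_id t).const_mul C
      exact hsq.sub hlin
    have hψanti : AntitoneOn ψ (Icc 0 1) := by
      apply antitoneOn_of_deriv_nonpos (convex_Icc 0 1)
      · apply ContinuousOn.sub ?_ (continuousOn_const.mul continuousOn_id)
        exact (hvcont.add continuousOn_const).sqrt
      · rw [interior_Icc]
        intro t ht
        exact (hψderiv t ht).differentiableAt.differentiableWithinAt
      · rw [interior_Icc]
        intro t ht
        rw [(hψderiv t ht).deriv]
        have hvt0 : 0 ≤ v t := hvnonneg t ⟨ht.1.le, ht.2.le⟩
        have hvt : 0 < v t + ε := by linarith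
        set s := Real.sqrt (v t + ε) with hs
        have hspos : 0 < s := Real.sqrt_pos.2 hvt
        have hb := hvd_bound t ⟨ht.1.le, ht.2⟩
        have h4 : Real.sqrt (2 * N * v t) ≤ Real.sqrt (2 * N) * s := by
          rw [hs, ← Real.sqrt_mul (by positivity)]
          apply Real.sqrt_le_sqrt
          nlinarith
        have h5 : -(fderiv ℝ u (γ t) (y - z)) ≤ Real.sqrt (2 * N) * s * L := by
          calc -(fderiv ℝ u (γ t) (y - z)) ≤ Real.sqrt (2 * N * v t) * L := hb
            _ ≤ Real.sqrt (2 * N) * s * L :=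
              mul_le_mul_of_nonneg_right h4 (norm_nonneg _)
        have h6 : 1 / (2*s) * (-(fderiv ℝ u (γ t) (y - z)))
            ≤ 1/(2*s) * (Real.sqrt (2*N) * s * L) :=
          mul_le_mul_of_nonneg_left h5 (by positivity)
        have h7 : 1/(2*s) * (Real.sqrt (2*N) * s * L) = Real.sqrt (2*N) * L / 2 := by
          field_simp
        rw [hC]
        linarith
    have hkey := hψanti (left_mem_Icc.2 zero_le_one) (right_mem_Icc.2 zero_le_one) zero_le_one
    have hψ0 : ψ 0 = Real.sqrt ε := by
      simp [hψ, hv, hγ0]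
    have hψ1 : ψ 1 = Real.sqrt (u z + ε) - C := by
      simp [hψ, hv, hγ1, hbdry y hy]
    rw [hψ0, hψ1] at hkey
    linarith
  have hlim : Filter.Tendsto (fun ε : ℝ => Real.sqrt ε + C) (𝓝[>] (0:ℝ)) (𝓝 (0 + C)) := by
    have h1 : Filter.Tendsto (fun ε : ℝ => Real.sqrt ε) (𝓝[>] (0:ℝ)) (𝓝 0) := by
      have := (Real.continuous_sqrt.tendsto 0).mono_left (nhdsWithin_le_nhds (s := Ioi (0:ℝ)))
      simpa using this
    exact h1.add tendsto_const_nhds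
  have hfin : Real.sqrt (u z) ≤ 0 + C := by
    apply ge_of_tendsto hlim
    filter_upwards [self_mem_nhdsWithin] with ε hε
    have h8 := hmain ε hε
    have hε' : (0:ℝ) < ε := hε
    have h9 : Real.sqrt (u z) ≤ Real.sqrt (u z + ε) := Real.sqrt_le_sqrt (by linarith)
    linarith
  rw [hC] at hfin
  linarith


/-- for a bounded convex domain with John's ellipsoid `E_a(c)`, the maximum
point `z` of the torsion function satisfies `d_Γ(z) ≥ m₋₂(a)/√N`, where `m₋₂(a)` is the
`(−2)`-power mean of the semi-axes. -/
theorem stmt_5 {N : ℕ} (hN : 2 ≤ N) (Ω : Set (EuclideanSpace ℝ (Fin N)))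
    (hΩopen : IsOpen Ω) (hΩconv : Convex ℝ Ω) (hΩne : Ω.Nonempty)
    (hΩbdd : Bornology.IsBounded Ω)
    (a : Fin N → ℝ) (ha : ∀ i, 0 < a i) (hasorted : Monotone a)
    (c : EuclideanSpace ℝ (Fin N))
    (hJohnSub : Ellipsoid a c ⊆ Ω)
    (hJohnMax : ∀ (a' : Fin N → ℝ) (c' : EuclideanSpace ℝ (Fin N)), (∀ i, 0 < a' i) →
      Ellipsoid a' c' ⊆ Ω → volume (Ellipsoid a' c') ≤ volume (Ellipsoid a c))
    (u : EuclideanSpace ℝ (Fin N) → ℝ)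
    (hu_cont : ContinuousOn u (closure Ω))
    (hu_C2 : ContDiffOn ℝ 2 u Ω)
    (hpde : ∀ x ∈ Ω, -laplacian u x = (N : ℝ))
    (hbdry : ∀ x ∈ frontier Ω, u x = 0)
    (z : EuclideanSpace ℝ (Fin N)) (hz : z ∈ Ω)
    (hzmax : ∀ x ∈ closure Ω, u x ≤ u z)
    (hgrad : ∀ x ∈ closure Ω, ‖gradient u x‖ ^ 2 ≤ 2 * N * (u z - u x)) :
    infDist z (frontier Ω) ≥
      Real.sqrt (((N : ℝ)⁻¹ * ∑ i, (a i ^ 2)⁻¹)⁻¹) / Real.sqrt N := by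
  have hNpos : (0:ℝ) < N := by exact_mod_cast Nat.lt_of_lt_of_le Nat.zero_lt_two hN
  haveI : Nonempty (Fin N) := ⟨⟨0, by omega⟩⟩
  set S := ∑ i, (a i ^ 2)⁻¹ with hS
  have hSpos : 0 < S := Finset.sum_pos (fun i _ => by have := ha i; positivity)
    Finset.univ_nonempty
  have hRHS : Real.sqrt (((N : ℝ)⁻¹ * S)⁻¹) / Real.sqrt N = Real.sqrt S⁻¹ := by
    rw [mul_inv, inv_inv, Real.sqrt_mul (le_of_lt hNpos)]
    rw [mul_comm, mul_div_assoc, div_self (by positivity : Real.sqrt (N:ℝ) ≠ 0), mul_one]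
  rw [hRHS]
  have hfne := frontier_ne hN hΩne hΩbdd
  have hfcpt : IsCompact (frontier Ω) :=
    Metric.isCompact_of_isClosed_isBounded isClosed_frontier
      (hΩbdd.closure.subset frontier_subset_closure)
  obtain ⟨y, hy, hyd⟩ := hfcpt.exists_infDist_eq_dist hfne z
  rw [ge_iff_le, hyd]
  have hA := step_A hN hΩopen hΩconv hu_cont hu_C2 hbdry hz hzmax hgrad hy
  have hB := u_center hN hΩopen hΩne hΩbdd a ha c hJohnSub hu_cont hu_C2 hpde hbdry
  have hcE : c ∈ Ellipsoid a c := by simp [Ellipsoid]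
  have hcz : u c ≤ u z := hzmax c (subset_closure (hJohnSub hcE))
  rw [← hS] at hB
  set d := dist z y with hd
  have hnd : ‖y - z‖ = d := (dist_eq_norm' z y).symm
  rw [hnd] at hA
  have hd0 : 0 ≤ d := dist_nonneg
  have h1 : Real.sqrt ((N:ℝ)/(2*S)) ≤ Real.sqrt (2*N) * d / 2 := by
    refine le_trans (Real.sqrt_le_sqrt (by linarith)) hA
  have h2 : (N:ℝ)/(2*S) ≤ (Real.sqrt (2*N) * d / 2)^2 := by
    have h3 := Real.sq_sqrt (show (0:ℝ) ≤ (N:ℝ)/(2*S) by positivity)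
    calc (N:ℝ)/(2*S) = (Real.sqrt ((N:ℝ)/(2*S)))^2 := h3.symm
      _ ≤ (Real.sqrt (2*N) * d / 2)^2 :=
        pow_le_pow_left₀ (Real.sqrt_nonneg _) h1 2
  have h4 : (Real.sqrt (2*(N:ℝ)))^2 = 2*N := Real.sq_sqrt (by positivity)
  have h5 : S⁻¹ ≤ d^2 := by
    have h6 : (Real.sqrt (2*(N:ℝ)) * d / 2)^2 = 2*N * d^2/4 := by
      rw [div_pow, mul_pow, h4]; norm_num
    rw [h6] at h2
    rw [div_le_div_iff₀ (by positivity) (by norm_num : (0:ℝ) < 4)] at h2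
    rw [← one_div, div_le_iff₀ hSpos]
    nlinarith
  calc Real.sqrt S⁻¹ ≤ Real.sqrt (d^2) := Real.sqrt_le_sqrt h5
    _ = d := Real.sqrt_sq hd0
end

section
/- For every N ≥ 2, with λ₁(B) the first Dirichlet eigenvalue of the Laplacian on the unit ball B ⊂ ℝ^N and ω_k the volume of the unit ball in ℝ^k, it holds that (N/2)^{N−1} · ω_{N−1}/(ω_N · λ₁(B)^N) ≤ π/(2√(λ₁(B))). -/
open Metric MeasureTheory

/-- The first Dirichlet eigenvalue of `−Δ` on `Ω`, via the variational (Rayleigh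
quotient) characterization over smooth functions compactly supported in `Ω`. -/
noncomputable def dirichletEig1 {N : ℕ} (Ω : Set (EuclideanSpace ℝ (Fin N))) : ℝ :=
  sInf {R : ℝ | ∃ v : EuclideanSpace ℝ (Fin N) → ℝ, ContDiff ℝ 1 v ∧
    HasCompactSupport v ∧ tsupport v ⊆ Ω ∧ (∫ x, v x ^ 2) ≠ 0 ∧
    R = (∫ x, ‖gradient v x‖ ^ 2) / (∫ x, v x ^ 2)}

/-- `ω_k`, the volume of the unit ball in `ℝ^k`. -/
noncomputable def unitBallVol (k : ℕ) : ℝ :=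
  (volume (ball (0 : EuclideanSpace ℝ (Fin k)) 1)).toReal

lemma integral_fderiv_apply_eq_zero {N : ℕ} (ψ : EuclideanSpace ℝ (Fin N) → ℝ)
    (hψ : ContDiff ℝ 1 ψ) (hcs : HasCompactSupport ψ) (w : EuclideanSpace ℝ (Fin N)) :
    ∫ x, fderiv ℝ ψ x w = 0 := by
  obtain ⟨C, hC⟩ := hψ.lipschitzWith_of_hasCompactSupport hcs one_ne_zero
  have h := LipschitzWith.integral_lineDeriv_mul_eq (μ := volume)
    (LipschitzWith.const (b := (1:ℝ))) hC hcs (-w)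
  have hconst : ∀ x : EuclideanSpace ℝ (Fin N),
      lineDeriv ℝ (fun _ => (1:ℝ)) x (-w) = 0 := by
    intro x; simp [lineDeriv]
  simp only [hconst, zero_mul, integral_zero, neg_neg, mul_one] at h
  have hfun : (fun x => lineDeriv ℝ ψ x w) = fun x => fderiv ℝ ψ x w :=
    funext fun x => (hψ.differentiable one_ne_zero x).lineDeriv_eq_fderiv
  rw [← hfun, ← h]

lemma gamma_ratio {y : ℝ} (hy : 0 < y) :
    Real.Gamma (y + 1) ≤ Real.sqrt (y + 1/2) * Real.Gamma (y + 1/2) := by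
  have h1 : (0:ℝ) < y + 1/2 := by linarith
  have h2 : (0:ℝ) < y + 3/2 := by linarith
  have ha : 0 < Real.Gamma (y + 1/2) := Real.Gamma_pos_of_pos h1
  have hb : 0 < Real.Gamma (y + 3/2) := Real.Gamma_pos_of_pos h2
  have hc : 0 < Real.Gamma (y + 1) := Real.Gamma_pos_of_pos (by linarith)
  have hconv := Real.convexOn_log_Gamma.2 (Set.mem_Ioi.mpr h1) (Set.mem_Ioi.mpr h2)
    (by norm_num : (0:ℝ) ≤ 1/2) (by norm_num : (0:ℝ) ≤ 1/2) (by norm_num)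
  have hmid : (1/2 : ℝ) • (y + 1/2) + (1/2 : ℝ) • (y + 3/2) = y + 1 := by
    simp [smul_eq_mul]; ring
  rw [hmid] at hconv
  -- hconv : (log ∘ Gamma) (y+1) ≤ 1/2 • log Γ(y+1/2) + 1/2 • log Γ(y+3/2)
  have hexp := Real.exp_le_exp.mpr hconv
  rw [Function.comp_apply, Real.exp_log hc] at hexp
  have hrhs : Real.exp ((1/2 : ℝ) • (Real.log ∘ Real.Gamma) (y + 1/2)
      + (1/2 : ℝ) • (Real.log ∘ Real.Gamma) (y + 3/2))
      = Real.sqrt (Real.Gamma (y + 1/2) * Real.Gamma (y + 3/2)) := by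
    rw [Function.comp_apply, Function.comp_apply, smul_eq_mul, smul_eq_mul,
      show (1/2 : ℝ) * Real.log (Real.Gamma (y + 1/2)) + 1/2 * Real.log (Real.Gamma (y + 3/2))
        = (Real.log (Real.Gamma (y + 1/2)) + Real.log (Real.Gamma (y + 3/2))) / 2 by ring,
      ← Real.log_mul ha.ne' hb.ne', Real.exp_half, Real.exp_log (by positivity)]
  rw [hrhs] at hexp
  have hG32 : Real.Gamma (y + 3/2) = (y + 1/2) * Real.Gamma (y + 1/2) := by
    have := Real.Gamma_add_one (s := y + 1/2) h1.ne'
    rw [show y + 1/2 + 1 = y + 3/2 by ring] at this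
    exact this
  calc Real.Gamma (y + 1) ≤ Real.sqrt (Real.Gamma (y + 1/2) * Real.Gamma (y + 3/2)) := hexp
    _ = Real.sqrt (y + 1/2) * Real.Gamma (y + 1/2) := by
        rw [hG32, show Real.Gamma (y + 1/2) * ((y + 1/2) * Real.Gamma (y + 1/2))
            = (y + 1/2) * (Real.Gamma (y + 1/2) * Real.Gamma (y + 1/2)) by ring,
          Real.sqrt_mul h1.le, Real.sqrt_mul_self ha.le]

lemma unitBallVol_eq (k : ℕ) (hk : 1 ≤ k) :
    unitBallVol k = Real.sqrt Real.pi ^ k / Real.Gamma (k / 2 + 1) := by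
  haveI : Nonempty (Fin k) := ⟨⟨0, hk⟩⟩
  rw [unitBallVol, EuclideanSpace.volume_ball]
  simp only [Fintype.card_fin, ENNReal.ofReal_one, one_pow, one_mul]
  exact ENNReal.toReal_ofReal
    (div_nonneg (pow_nonneg (Real.sqrt_nonneg _) _)
      (Real.Gamma_pos_of_pos (by positivity)).le)

lemma poincare {N : ℕ} (hN : 2 ≤ N) (v : EuclideanSpace ℝ (Fin N) → ℝ)
    (hv : ContDiff ℝ 1 v) (hcs : HasCompactSupport v)
    (hsup : tsupport v ⊆ ball (0 : EuclideanSpace ℝ (Fin N)) 1) :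
    (N : ℝ) ^ 2 / 4 * ∫ x, v x ^ 2 ≤ ∫ x, ‖gradient v x‖ ^ 2 := by
  have hNpos : (0:ℝ) < N := by positivity
  have hN2 : (2:ℝ) ≤ N := by exact_mod_cast hN
  have cv := hv.continuous
  have cDv : Continuous fun x => fderiv ℝ v x := hv.continuous_fderiv one_ne_zero
  have hvd : ∀ y, HasFDerivAt v (fderiv ℝ v y) y :=
    fun y => (hv.differentiable one_ne_zero y).hasFDerivAt
  -- integrability
  have hv2cs : HasCompactSupport (fun x => v x * v x) :=
    HasCompactSupport.intro hcs fun x hx => by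
      simp [image_eq_zero_of_notMem_tsupport hx]
  have hIint : Integrable (fun x => v x * v x) :=
    (cv.mul cv).integrable_of_hasCompactSupport hv2cs
  have hDzero : ∀ x, x ∉ tsupport v → fderiv ℝ v x = 0 := by
    intro x hx
    by_contra h
    exact hx (support_fderiv_subset ℝ (Function.mem_support.mpr h))
  have hGcs : HasCompactSupport fun x => ‖fderiv ℝ v x‖ ^ 2 :=
    HasCompactSupport.intro hcs fun x hx => by simp [hDzero x hx]
  have hGint : Integrable fun x => ‖fderiv ℝ v x‖ ^ 2 :=
    (cDv.norm.pow 2).integrable_of_hasCompactSupport hGcs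
  have hHcont : Continuous fun x => v x * fderiv ℝ v x x :=
    cv.mul (cDv.clm_apply continuous_id)
  have hHint : Integrable fun x => v x * fderiv ℝ v x x :=
    hHcont.integrable_of_hasCompactSupport
      (HasCompactSupport.intro hcs fun x hx => by
        simp [image_eq_zero_of_notMem_tsupport hx])
  -- the vector fields
  have hψd : ∀ i : Fin N, ContDiff ℝ 1 (fun y : EuclideanSpace ℝ (Fin N) => v y * v y * y i) :=
    fun i => (hv.mul hv).mul (by exact (EuclideanSpace.proj (𝕜 := ℝ) i).contDiff)
  have hψcs : ∀ i : Fin N,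
      HasCompactSupport (fun y : EuclideanSpace ℝ (Fin N) => v y * v y * y i) :=
    fun i => HasCompactSupport.intro hcs fun x hx => by
      simp [image_eq_zero_of_notMem_tsupport hx]
  -- pointwise divergence identity
  have hdiv : ∀ x : EuclideanSpace ℝ (Fin N),
      (∑ i : Fin N, fderiv ℝ (fun y => v y * v y * y i) x (EuclideanSpace.single i 1))
        = N * (v x * v x) + 2 * (v x * fderiv ℝ v x x) := by
    intro x
    have hterm : ∀ i : Fin N,
        fderiv ℝ (fun y : EuclideanSpace ℝ (Fin N) => v y * v y * y i) x
            (EuclideanSpace.single i 1)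
          = v x * v x + x i * (2 * (v x * fderiv ℝ v x (EuclideanSpace.single i 1))) := by
      intro i
      have hproj : HasFDerivAt (fun y : EuclideanSpace ℝ (Fin N) => y i)
          (EuclideanSpace.proj (𝕜 := ℝ) i) x := by
        exact (EuclideanSpace.proj (𝕜 := ℝ) (i : Fin N)).hasFDerivAt
      have h1 : HasFDerivAt (fun y : EuclideanSpace ℝ (Fin N) => v y * v y)
          (v x • fderiv ℝ v x + v x • fderiv ℝ v x) x := (hvd x).mul (hvd x)
      have h2 : HasFDerivAt (fun y : EuclideanSpace ℝ (Fin N) => v y * v y * y i) _ x :=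
        h1.mul hproj
      rw [h2.fderiv]
      simp only [ContinuousLinearMap.add_apply, ContinuousLinearMap.smul_apply,
        ContinuousLinearMap.coe_smul', Pi.smul_apply, smul_eq_mul]
      have hps : (EuclideanSpace.proj (𝕜 := ℝ) i) (EuclideanSpace.single i (1:ℝ)) = 1 := by
        simp
      rw [hps]
      ring
    rw [Finset.sum_congr rfl fun i _ => hterm i, Finset.sum_add_distrib,
      Finset.sum_const, Finset.card_univ, Fintype.card_fin]
    have hx : ∑ i : Fin N, x i • EuclideanSpace.single i (1:ℝ) = x := by
      have h := (EuclideanSpace.basisFun (Fin N) ℝ).sum_repr x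
      simpa [EuclideanSpace.basisFun_apply, EuclideanSpace.basisFun_repr] using h
    have hsum : ∑ i : Fin N, x i * (2 * (v x * fderiv ℝ v x (EuclideanSpace.single i 1)))
        = 2 * (v x * fderiv ℝ v x x) := by
      have hDx : fderiv ℝ v x x = ∑ i : Fin N, x i * fderiv ℝ v x (EuclideanSpace.single i 1) := by
        have h := congrArg (fderiv ℝ v x) hx
        rw [map_sum] at h
        simp only [ContinuousLinearMap.map_smul, smul_eq_mul] at h
        exact h.symm
      rw [hDx]
      simp only [Finset.mul_sum]
      exact Finset.sum_congr rfl fun i _ => by ring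
    rw [hsum]
    simp [nsmul_eq_mul]
  -- integral of the divergence vanishes
  have hzero : ∫ x, ((N : ℝ) * (v x * v x) + 2 * (v x * fderiv ℝ v x x)) = 0 := by
    have heq : (fun x : EuclideanSpace ℝ (Fin N) =>
        (N : ℝ) * (v x * v x) + 2 * (v x * fderiv ℝ v x x))
        = fun x => ∑ i : Fin N, fderiv ℝ (fun y => v y * v y * y i) x
            (EuclideanSpace.single i 1) := funext fun x => (hdiv x).symm
    rw [heq, integral_finset_sum]
    · exact Finset.sum_eq_zero fun i _ =>
        integral_fderiv_apply_eq_zero _ (hψd i) (hψcs i) _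
    · intro i _
      have hcont : Continuous fun x => fderiv ℝ
          (fun y : EuclideanSpace ℝ (Fin N) => v y * v y * y i) x (EuclideanSpace.single i 1) :=
        ((hψd i).continuous_fderiv one_ne_zero).clm_apply continuous_const
      refine hcont.integrable_of_hasCompactSupport
        (HasCompactSupport.intro (hψcs i) fun x hx => ?_)
      have : fderiv ℝ (fun y : EuclideanSpace ℝ (Fin N) => v y * v y * y i) x = 0 := by
        by_contra h
        exact hx (support_fderiv_subset ℝ (Function.mem_support.mpr h))
      simp [this]
  -- rearrange
  have hsplit : (N : ℝ) * ∫ x, v x * v x = ∫ x, (-2 : ℝ) * (v x * fderiv ℝ v x x) := by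
    rw [integral_add (hIint.const_mul _) (hHint.const_mul 2), integral_const_mul,
      integral_const_mul] at hzero
    rw [integral_const_mul]
    linarith
  -- pointwise bound
  have hbound : ∀ x, (-2 : ℝ) * (v x * fderiv ℝ v x x)
      ≤ (N : ℝ)/2 * (v x * v x) + 2/(N : ℝ) * ‖fderiv ℝ v x‖ ^ 2 := by
    intro x
    have hle : |fderiv ℝ v x x| ≤ ‖fderiv ℝ v x‖ := by
      by_cases hx : x ∈ tsupport v
      · have hxb : ‖x‖ ≤ 1 := le_of_lt (mem_ball_zero_iff.mp (hsup hx))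
        have h1 : |fderiv ℝ v x x| ≤ ‖fderiv ℝ v x‖ * ‖x‖ := by
          simpa [Real.norm_eq_abs] using (fderiv ℝ v x).le_opNorm x
        nlinarith [norm_nonneg (fderiv ℝ v x)]
      · simp [hDzero x hx]
    have habs : (-2 : ℝ) * (v x * fderiv ℝ v x x) ≤ 2 * (|v x| * ‖fderiv ℝ v x‖) := by
      have h1 : -(v x * fderiv ℝ v x x) ≤ |v x * fderiv ℝ v x x| := neg_le_abs _
      rw [abs_mul] at h1
      nlinarith [abs_nonneg (v x), mul_le_mul_of_nonneg_left hle (abs_nonneg (v x))]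
    set aa := |v x| with haa
    set bb := ‖fderiv ℝ v x‖ with hbb
    have h4 : 4*(N : ℝ)*(aa*bb) ≤ (N : ℝ)^2*aa^2 + 4*bb^2 := by
      nlinarith [sq_nonneg ((N : ℝ)*aa - 2*bb)]
    have h5 : 2*(aa*bb) ≤ (N : ℝ)/2*aa^2 + 2/(N : ℝ)*bb^2 := by
      apply le_of_mul_le_mul_right _ (show (0:ℝ) < 2*N by positivity)
      have h6 : ((N : ℝ)/2*aa^2 + 2/(N : ℝ)*bb^2) * (2*N) = (N : ℝ)^2*aa^2 + 4*bb^2 := by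
        field_simp; ring
      rw [h6, show (2*(aa*bb))*(2*(N : ℝ)) = 4*(N : ℝ)*(aa*bb) by ring]
      exact h4
    have h7 : aa^2 = v x * v x := by rw [haa, sq_abs]; ring
    nlinarith [habs, h5, h7]
  have hmono : ∫ x, (-2 : ℝ) * (v x * fderiv ℝ v x x)
      ≤ ∫ x, ((N : ℝ)/2 * (v x * v x) + 2/(N : ℝ) * ‖fderiv ℝ v x‖ ^ 2) :=
    integral_mono (hHint.const_mul _) ((hIint.const_mul _).add (hGint.const_mul _)) hbound
  rw [integral_add (hIint.const_mul _) (hGint.const_mul _)] at hmono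
  simp only [integral_const_mul] at hmono hsplit
  have key : (N : ℝ)/2 * ∫ x, v x * v x ≤ 2/(N : ℝ) * ∫ x, ‖fderiv ℝ v x‖ ^ 2 := by
    linarith
  have hgrad : (fun x : EuclideanSpace ℝ (Fin N) => ‖gradient v x‖ ^ 2)
      = fun x => ‖fderiv ℝ v x‖ ^ 2 := by
    funext x
    simp [gradient, LinearIsometryEquiv.norm_map]
  have hIeq : ∫ x, v x * v x = ∫ x, v x ^ 2 := by simp_rw [pow_two]
  simp only [hgrad]
  have hfin : (N : ℝ)/2 * (2/(N : ℝ) * ∫ x, ‖fderiv ℝ v x‖ ^ 2) = ∫ x, ‖fderiv ℝ v x‖ ^ 2 := by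
    rw [show (N : ℝ)/2 * (2/(N : ℝ) * ∫ x, ‖fderiv ℝ v x‖ ^ 2)
      = ((N : ℝ)/2 * (2/(N : ℝ))) * ∫ x, ‖fderiv ℝ v x‖ ^ 2 by ring,
      show (N : ℝ)/2 * (2/(N : ℝ)) = 1 by field_simp, one_mul]
  calc (N : ℝ) ^ 2 / 4 * ∫ x, v x ^ 2
      = (N : ℝ)/2 * ((N : ℝ)/2 * ∫ x, v x * v x) := by rw [hIeq]; ring
    _ ≤ (N : ℝ)/2 * (2/(N : ℝ) * ∫ x, ‖fderiv ℝ v x‖ ^ 2) :=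
        mul_le_mul_of_nonneg_left key (by positivity)
    _ = ∫ x, ‖fderiv ℝ v x‖ ^ 2 := hfin


set_option maxHeartbeats 1000000 in
/-- for every `N ≥ 2`, with `λ₁(B)` the first Dirichlet eigenvalue of the
unit ball `B ⊂ ℝ^N` and `ω_k` the volume of the unit ball in `ℝ^k`,
`(N/2)^{N−1}·ω_{N−1}/(ω_N·λ₁(B)^N) ≤ π/(2√λ₁(B))`. -/
theorem stmt_10 (N : ℕ) (hN : 2 ≤ N) :
    ((N : ℝ) / 2) ^ (N - 1) * unitBallVol (N - 1) /
        (unitBallVol N * (dirichletEig1 (ball (0 : EuclideanSpace ℝ (Fin N)) 1)) ^ N)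
      ≤ Real.pi / (2 * Real.sqrt (dirichletEig1 (ball (0 : EuclideanSpace ℝ (Fin N)) 1))) := by
  classical
  set Ω := ball (0 : EuclideanSpace ℝ (Fin N)) 1 with hΩ
  set S : Set ℝ := {R : ℝ | ∃ v : EuclideanSpace ℝ (Fin N) → ℝ, ContDiff ℝ 1 v ∧
    HasCompactSupport v ∧ tsupport v ⊆ Ω ∧ (∫ x, v x ^ 2) ≠ 0 ∧
    R = (∫ x, ‖gradient v x‖ ^ 2) / (∫ x, v x ^ 2)} with hSdef
  have hdef : dirichletEig1 Ω = sInf S := rfl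
  rcases S.eq_empty_or_nonempty with hemp | hne
  · rw [hdef, hemp, Real.sInf_empty]
    simp [Real.sqrt_zero, zero_pow (show N ≠ 0 by omega)]
  · have hNR : (2 : ℝ) ≤ (N : ℝ) := by exact_mod_cast hN
    have hlow : (N : ℝ) ^ 2 / 4 ≤ sInf S := by
      apply le_csInf hne
      rintro R ⟨v, hv, hcs, hsub, hI, rfl⟩
      have hp := poincare hN v hv hcs hsub
      have hI0 : 0 ≤ ∫ x, v x ^ 2 := integral_nonneg fun x => sq_nonneg _
      have hIpos : 0 < ∫ x, v x ^ 2 := lt_of_le_of_ne hI0 (Ne.symm hI)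
      rw [le_div_iff₀ hIpos]
      linarith
    rw [hdef]
    set L := sInf S with hLdef
    have hy : 1 ≤ (N : ℝ) / 2 := by linarith
    have hLpos : 0 < L := lt_of_lt_of_le (by positivity) hlow
    have hyL : ((N : ℝ) / 2) ^ 2 ≤ L := by
      calc ((N : ℝ) / 2) ^ 2 = (N : ℝ) ^ 2 / 4 := by ring
        _ ≤ L := hlow
    have hsL : (N : ℝ) / 2 ≤ Real.sqrt L := (Real.le_sqrt (by positivity) hLpos.le).mpr hyL
    have hsLpos : 0 < Real.sqrt L := Real.sqrt_pos.mpr hLpos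
    have hωN : unitBallVol N = Real.sqrt Real.pi ^ N / Real.Gamma ((N : ℝ) / 2 + 1) :=
      unitBallVol_eq N (by omega)
    have hcast : ((N - 1 : ℕ) : ℝ) = (N : ℝ) - 1 := by
      have h1 : (1 : ℕ) ≤ N := by omega
      push_cast [Nat.cast_sub h1]
      ring
    have hωK : unitBallVol (N - 1)
        = Real.sqrt Real.pi ^ (N - 1) / Real.Gamma ((N : ℝ) / 2 + 1/2) := by
      have hbase := unitBallVol_eq (N - 1) (by omega)
      rw [hbase, hcast, show ((N : ℝ) - 1) / 2 + 1 = (N : ℝ) / 2 + 1/2 by ring]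
    have ha : 0 < Real.Gamma ((N : ℝ) / 2 + 1/2) := Real.Gamma_pos_of_pos (by positivity)
    have hb : 0 < Real.Gamma ((N : ℝ) / 2 + 1) := Real.Gamma_pos_of_pos (by positivity)
    have hΓ : Real.Gamma ((N : ℝ) / 2 + 1)
        ≤ Real.sqrt ((N : ℝ) / 2 + 1/2) * Real.Gamma ((N : ℝ) / 2 + 1/2) :=
      gamma_ratio (by positivity)
    have hsπ : 0 < Real.sqrt Real.pi := Real.sqrt_pos.mpr Real.pi_pos
    rw [hωN, hωK]
    rw [div_le_div_iff₀ (by positivity) (by positivity)]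
    set y := (N : ℝ) / 2 with hydef
    set K := N - 1 with hKdef
    have hN' : N = K + 1 := by omega
    have hLn : L ^ N = L ^ K * (Real.sqrt L * Real.sqrt L) := by
      rw [hN', pow_succ, Real.mul_self_sqrt hLpos.le]
    have hsn : Real.sqrt Real.pi ^ N = Real.sqrt Real.pi ^ K * Real.sqrt Real.pi := by
      rw [hN', pow_succ]
    have hLK : (y ^ 2) ^ K ≤ L ^ K := pow_le_pow_left₀ (by positivity) hyL K
    have hyNle : y ^ N * Real.sqrt L ≤ L ^ N := by
      have h1 : (y ^ 2) ^ K * (y * Real.sqrt L) ≤ L ^ K * (Real.sqrt L * Real.sqrt L) :=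
        mul_le_mul hLK (mul_le_mul_of_nonneg_right hsL (Real.sqrt_nonneg _))
          (by positivity) (by positivity)
      have h3 : y ^ N ≤ (y ^ 2) ^ K * y := by
        rw [← pow_mul, hN']
        calc y ^ (K + 1) ≤ y ^ (2 * K + 1) := pow_le_pow_right₀ hy (by omega)
          _ = y ^ (2 * K) * y := pow_succ _ _
      have h2 : y ^ N * Real.sqrt L ≤ (y ^ 2) ^ K * (y * Real.sqrt L) := by
        calc y ^ N * Real.sqrt L ≤ ((y ^ 2) ^ K * y) * Real.sqrt L :=
              mul_le_mul_of_nonneg_right h3 (Real.sqrt_nonneg _)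
          _ = (y ^ 2) ^ K * (y * Real.sqrt L) := by ring
      rw [hLn]; exact h2.trans h1
    have hmid : 2 * y ^ K * Real.Gamma (y + 1)
        ≤ Real.pi * Real.sqrt Real.pi * y ^ N * Real.Gamma (y + 1/2) := by
      have hs1 : Real.sqrt (y + 1/2) ≤ y + 1/2 := by
        have hq : y + 1/2 ≤ (y + 1/2) ^ 2 := by nlinarith
        calc Real.sqrt (y + 1/2) ≤ Real.sqrt ((y + 1/2) ^ 2) := Real.sqrt_le_sqrt hq
          _ = y + 1/2 := Real.sqrt_sq (by positivity)
      have hπ3 : (3 : ℝ) < Real.pi := Real.pi_gt_three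
      have hsπ17 : (1.7 : ℝ) ≤ Real.sqrt Real.pi :=
        (Real.le_sqrt (by norm_num) Real.pi_pos.le).mpr (by nlinarith)
      have hy0 : (0:ℝ) < y := by linarith
      have hππ : (5.1 : ℝ) ≤ Real.pi * Real.sqrt Real.pi := by nlinarith [hπ3, hsπ17]
      have h2 : 2 * Real.sqrt (y + 1/2) ≤ Real.pi * Real.sqrt Real.pi * y := by
        nlinarith [hs1, hππ, hy, hy0]
      calc 2 * y ^ K * Real.Gamma (y + 1)
          ≤ 2 * y ^ K * (Real.sqrt (y + 1/2) * Real.Gamma (y + 1/2)) :=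
            mul_le_mul_of_nonneg_left hΓ (by positivity)
        _ = (2 * Real.sqrt (y + 1/2)) * (y ^ K * Real.Gamma (y + 1/2)) := by ring
        _ ≤ (Real.pi * Real.sqrt Real.pi * y) * (y ^ K * Real.Gamma (y + 1/2)) :=
            mul_le_mul_of_nonneg_right h2 (by positivity)
        _ = Real.pi * Real.sqrt Real.pi * (y ^ K * y) * Real.Gamma (y + 1/2) := by ring
        _ = Real.pi * Real.sqrt Real.pi * y ^ N * Real.Gamma (y + 1/2) := by
            rw [hN', pow_succ]
    have hgoal : (y ^ K * Real.sqrt Real.pi ^ K * (2 * Real.sqrt L)) / Real.Gamma (y + 1/2)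
        ≤ (Real.pi * (Real.sqrt Real.pi ^ N * L ^ N)) / Real.Gamma (y + 1) := by
      rw [div_le_div_iff₀ ha hb]
      calc y ^ K * Real.sqrt Real.pi ^ K * (2 * Real.sqrt L) * Real.Gamma (y + 1)
          = (Real.sqrt Real.pi ^ K * Real.sqrt L) * (2 * y ^ K * Real.Gamma (y + 1)) := by ring
        _ ≤ (Real.sqrt Real.pi ^ K * Real.sqrt L)
              * (Real.pi * Real.sqrt Real.pi * y ^ N * Real.Gamma (y + 1/2)) :=
            mul_le_mul_of_nonneg_left hmid (by positivity)
        _ = (Real.pi * Real.sqrt Real.pi ^ K * Real.sqrt Real.pi * Real.Gamma (y + 1/2))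
              * (y ^ N * Real.sqrt L) := by ring
        _ ≤ (Real.pi * Real.sqrt Real.pi ^ K * Real.sqrt Real.pi * Real.Gamma (y + 1/2))
              * L ^ N := mul_le_mul_of_nonneg_left hyNle (by positivity)
        _ = Real.pi * (Real.sqrt Real.pi ^ N * L ^ N) * Real.Gamma (y + 1/2) := by
            rw [hsn]; ring
    calc y ^ K * (Real.sqrt Real.pi ^ K / Real.Gamma (y + 1/2)) * (2 * Real.sqrt L)
        = (y ^ K * Real.sqrt Real.pi ^ K * (2 * Real.sqrt L)) / Real.Gamma (y + 1/2) := by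
          ring
      _ ≤ (Real.pi * (Real.sqrt Real.pi ^ N * L ^ N)) / Real.Gamma (y + 1) := hgoal
      _ = Real.pi * (Real.sqrt Real.pi ^ N / Real.Gamma (y + 1) * L ^ N) := by ring
end

section
/- Let λ > 0, K > 0, and let u: cl Ω × (0,∞) → ℝ satisfy |∇u|² + λu² ≤ K²e^{−2λt} and u ≥ 0 in Ω × (0,∞) with u = 0 on ∂Ω. Fix t > 0, let z be a maximum point of u(·,t) with value M(t), and y the nearest boundary point to z. Then √λ·M(t)·e^{λt}/K ≤ √λ·d_Γ(z), i.e., d_Γ(z) ≥ M(t)·e^{λt}/K. -/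
open Metric Set Topology

/-- if `|∇u|² + λu² ≤ K²e^{−2λt}` with `u ≥ 0` in `Ω × (0,∞)` and `u = 0`
on `∂Ω`, then for fixed `t > 0`, a maximum point `z` of `u(·,t)` with value `M(t)`
satisfies `√λ·M(t)·e^{λt}/K ≤ √λ·d_Γ(z)`, i.e. `d_Γ(z) ≥ M(t)·e^{λt}/K`. -/
theorem stmt_12 {N : ℕ} (hN : 2 ≤ N) (Ω : Set (EuclideanSpace ℝ (Fin N)))
    (hΩopen : IsOpen Ω) (hΩconn : IsConnected Ω) (hΩbdd : Bornology.IsBounded Ω)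
    (lam K : ℝ) (hlam : 0 < lam) (hK : 0 < K)
    (u : EuclideanSpace ℝ (Fin N) → ℝ → ℝ)
    (hu_C1 : ∀ t > (0:ℝ), ContDiffOn ℝ 1 (fun x => u x t) (closure Ω))
    (hbound : ∀ t > (0:ℝ), ∀ x ∈ closure Ω,
      ‖gradient (fun x => u x t) x‖ ^ 2 + lam * (u x t) ^ 2 ≤ K ^ 2 * Real.exp (-2 * lam * t))
    (hnonneg : ∀ t > (0:ℝ), ∀ x ∈ Ω, 0 ≤ u x t)
    (hbdry : ∀ t > (0:ℝ), ∀ x ∈ frontier Ω, u x t = 0)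
    (t : ℝ) (ht : 0 < t)
    (z : EuclideanSpace ℝ (Fin N)) (hz : z ∈ Ω)
    (hzmax : ∀ x ∈ closure Ω, u x t ≤ u z t)
    (y : EuclideanSpace ℝ (Fin N)) (hy : y ∈ frontier Ω)
    (hnear : dist z y = infDist z (frontier Ω)) :
    Real.sqrt lam * (u z t) * Real.exp (lam * t) / K ≤
      Real.sqrt lam * infDist z (frontier Ω) := by
  classical
  set f : EuclideanSpace ℝ (Fin N) → ℝ := fun x => u x t with hf
  set d : ℝ := infDist z (frontier Ω) with hd
  set C : ℝ := K * Real.exp (-(lam * t)) with hC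
  have hCpos : 0 < C := by positivity
  -- z is not on the frontier
  have hznf : z ∉ frontier Ω := by
    rw [hΩopen.frontier_eq]
    exact fun h => h.2 hz
  have hd0 : 0 < d := by
    have := (isClosed_frontier.notMem_iff_infDist_pos ⟨y, hy⟩).1 hznf
    exact this
  -- Ω is not the whole space
  have hΩne : Ω ≠ univ := by
    intro h
    have : ¬ Bornology.IsBounded (univ : Set (EuclideanSpace ℝ (Fin N))) := by
      have hne : Nonempty (Fin N) := ⟨⟨0, by omega⟩⟩
      have : Nontrivial (EuclideanSpace ℝ (Fin N)) := inferInstance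
      simpa using NormedSpace.unbounded_univ ℝ (EuclideanSpace ℝ (Fin N))
    exact this (h ▸ hΩbdd)
  -- the ball of radius d around z is inside Ω
  have hball : ball z d ⊆ Ω := by
    obtain ⟨w, hwf, hwd⟩ := exists_mem_frontier_infDist_compl_eq_dist hz hΩne
    have hle : d ≤ infDist z Ωᶜ := by
      rw [hwd]
      exact infDist_le_dist_of_mem hwf
    exact (ball_subset_ball hle).trans ball_infDist_compl_subset
  -- differentiability inside Ω
  have hdiff : ∀ x ∈ ball z d, DifferentiableAt ℝ f x := by
    intro x hx
    have hxΩ : x ∈ Ω := hball hx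
    have hnh : closure Ω ∈ 𝓝 x := mem_nhds_iff.2 ⟨Ω, subset_closure, hΩopen, hxΩ⟩
    exact (((hu_C1 t ht).differentiableOn one_ne_zero) x (subset_closure hxΩ)).differentiableAt hnh
  -- gradient bound
  have hgrad : ∀ x ∈ ball z d, ‖fderiv ℝ f x‖ ≤ C := by
    intro x hx
    have hxΩ : x ∈ Ω := hball hx
    have hb := hbound t ht x (subset_closure hxΩ)
    have hnorm : ‖gradient f x‖ = ‖fderiv ℝ f x‖ :=
      (InnerProductSpace.toDual ℝ (EuclideanSpace ℝ (Fin N))).symm.norm_map _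
    have hexp : Real.exp (-2 * lam * t) = Real.exp (-(lam * t)) ^ 2 := by
      rw [sq, ← Real.exp_add]; ring_nf
    rw [hnorm] at hb
    have h1 : ‖fderiv ℝ f x‖ ^ 2 ≤ C ^ 2 := by
      rw [hC, mul_pow, ← hexp]
      nlinarith [sq_nonneg (u x t), hb]
    nlinarith [norm_nonneg (fderiv ℝ f x), hCpos, h1]
  -- the path from z towards y
  set p : ℝ → EuclideanSpace ℝ (Fin N) := fun θ => z + θ • (y - z) with hp
  have hpcont : Continuous p := by
    apply Continuous.add continuous_const
    exact (continuous_id.smul continuous_const)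
  have hp1 : p 1 = y := by simp [hp]
  have hpz : ∀ θ : ℝ, ‖z - p θ‖ = |θ| * d := by
    intro θ
    have : z - p θ = (-θ) • (y - z) := by
      show z - (z + θ • (y - z)) = (-θ) • (y - z)
      module
    rw [this, norm_smul, Real.norm_eq_abs, abs_neg]
    have : ‖y - z‖ = d := by rw [← hnear, dist_eq_norm]; rw [norm_sub_rev]
    rw [this]
  have hpball : ∀ θ ∈ Ico (0:ℝ) 1, p θ ∈ ball z d := by
    intro θ hθ
    rw [mem_ball, dist_comm, dist_eq_norm, hpz θ, abs_of_nonneg hθ.1]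
    nlinarith [hθ.1, hθ.2, hd0]
  -- key estimate for θ < 1
  have hkey : ∀ θ ∈ Ico (0:ℝ) 1, u z t ≤ f (p θ) + C * (θ * d) := by
    intro θ hθ
    have hzb : z ∈ ball z d := mem_ball_self hd0
    have := (convex_ball z d).norm_image_sub_le_of_norm_fderiv_le hdiff hgrad
      (hpball θ hθ) hzb
    -- ‖f z - f (p θ)‖ ≤ C * ‖z - p θ‖
    rw [hpz θ, abs_of_nonneg hθ.1] at this
    have h2 : u z t - f (p θ) ≤ C * (θ * d) := by
      calc u z t - f (p θ) ≤ |f z - f (p θ)| := le_abs_self _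
      _ = ‖f z - f (p θ)‖ := (Real.norm_eq_abs _).symm
      _ ≤ C * (θ * d) := this
    linarith
  -- pass to the limit θ → 1⁻
  have hfy : f y = 0 := hbdry t ht y hy
  have hne : (𝓝[Ico (0:ℝ) 1] 1).NeBot := by
    rw [← mem_closure_iff_nhdsWithin_neBot, closure_Ico (by norm_num : (0:ℝ) ≠ 1)]
    exact ⟨by norm_num, le_rfl⟩
  have hcont : Filter.Tendsto (fun θ => f (p θ) + C * (θ * d)) (𝓝[Ico (0:ℝ) 1] 1)
      (𝓝 (f y + C * (1 * d))) := by
    apply Filter.Tendsto.add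
    · have hfc := (hu_C1 t ht).continuousOn
      have hyc : y ∈ closure Ω := frontier_subset_closure hy
      have hcwa : ContinuousWithinAt f (closure Ω) y := hfc y hyc
      have hmaps : ∀ θ ∈ Ico (0:ℝ) 1, p θ ∈ closure Ω :=
        fun θ hθ => subset_closure (hball (hpball θ hθ))
      have hcwa' : ContinuousWithinAt f (closure Ω) (p 1) := by rw [hp1]; exact hcwa
      have := hcwa'.comp (f := p) (hpcont.continuousWithinAt (x := 1))
        (fun θ hθ => hmaps θ hθ)
      simpa [Function.comp_def, ContinuousWithinAt, hp1] using this
    · have : Filter.Tendsto (fun θ : ℝ => C * (θ * d)) (𝓝 1) (𝓝 (C * (1 * d))) := by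
        apply Filter.Tendsto.const_mul
        exact (continuous_id.mul continuous_const).tendsto 1
      exact this.mono_left nhdsWithin_le_nhds
  have hlim : u z t ≤ f y + C * (1 * d) := by
    apply ge_of_tendsto hcont
    exact Filter.eventually_of_mem self_mem_nhdsWithin (fun θ hθ => hkey θ hθ)
  have hmain : u z t ≤ C * d := by
    rw [hfy] at hlim; linarith
  -- conclude
  have hexp1 : Real.exp (-(lam * t)) * Real.exp (lam * t) = 1 := by
    rw [← Real.exp_add]; simp
  have hs : 0 ≤ Real.sqrt lam := Real.sqrt_nonneg lam
  rw [div_le_iff₀ hK]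
  have hepos : 0 < Real.exp (lam * t) := Real.exp_pos _
  have h3 : u z t * Real.exp (lam * t) ≤ K * d := by
    have := mul_le_mul_of_nonneg_right hmain hepos.le
    calc u z t * Real.exp (lam * t) ≤ C * d * Real.exp (lam * t) := this
    _ = K * d * (Real.exp (-(lam * t)) * Real.exp (lam * t)) := by ring
    _ = K * d := by rw [hexp1, mul_one]
  calc Real.sqrt lam * u z t * Real.exp (lam * t)
      = Real.sqrt lam * (u z t * Real.exp (lam * t)) := by ring
    _ ≤ Real.sqrt lam * (K * d) := mul_le_mul_of_nonneg_left h3 hs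
    _ = Real.sqrt lam * d * K := by ring
end
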